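/- arXiv:1906.11926 — 9 statements merged into one kernel-verified Lean document; each statement's English description precedes it below -/
import Mathlib

section
/- Let M be an integral point set in the plane and let m be a straight line. Then for every positive integer k there are at most 2k−1 distinct (unordered) pairs of points of M lying on m whose distance equals k. -/
lemma phi_mono {c : ℝ} (hc : 0 < c) : StrictMono (fun u : ℝ => u / Real.sqrt (u ^ 2 + c)) := by
  intro u v huv
  have hu : (0:ℝ) < u ^ 2 + c := by positivity
  have hv : (0:ℝ) < v ^ 2 + c := by positivity
  have hsu : Real.sqrt (u ^ 2 + c) > 0 := Real.sqrt_pos.2 hu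
  have hsv : Real.sqrt (v ^ 2 + c) > 0 := Real.sqrt_pos.2 hv
  have hsu2 : Real.sqrt (u ^ 2 + c) ^ 2 = u ^ 2 + c := Real.sq_sqrt hu.le
  have hsv2 : Real.sqrt (v ^ 2 + c) ^ 2 = v ^ 2 + c := Real.sq_sqrt hv.le
  have hu' : |u| < Real.sqrt (u ^ 2 + c) := by
    rw [← Real.sqrt_sq_eq_abs]
    exact Real.sqrt_lt_sqrt (sq_nonneg u) (by linarith)
  have hv' : |v| < Real.sqrt (v ^ 2 + c) := by
    rw [← Real.sqrt_sq_eq_abs]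
    exact Real.sqrt_lt_sqrt (sq_nonneg v) (by linarith)
  simp only
  rw [div_lt_div_iff₀ hsu hsv]
  rcases le_or_gt 0 u with h0u | h0u
  · apply lt_of_pow_lt_pow_left₀ 2 (mul_nonneg (by linarith) hsu.le)
    have huv2 : u ^ 2 < v ^ 2 := by nlinarith
    rw [mul_pow, mul_pow, hsu2, hsv2]
    nlinarith [mul_pos hc (show (0:ℝ) < v ^ 2 - u ^ 2 by linarith)]
  · rcases le_or_gt v 0 with h0v | h0v
    · have key : -v * Real.sqrt (u ^ 2 + c) < -u * Real.sqrt (v ^ 2 + c) := by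
        apply lt_of_pow_lt_pow_left₀ 2 (by nlinarith)
        have huv2 : v ^ 2 < u ^ 2 := by nlinarith
        rw [mul_pow, mul_pow, hsu2, hsv2]
        nlinarith [mul_pos hc (show (0:ℝ) < u ^ 2 - v ^ 2 by linarith)]
      linarith
    · have : u * Real.sqrt (v ^ 2 + c) < 0 := mul_neg_of_neg_of_pos h0u hsv
      have : 0 < v * Real.sqrt (u ^ 2 + c) := mul_pos h0v hsu
      linarith

lemma g_hasDeriv {c : ℝ} (hc : 0 < c) (α t : ℝ) :
    HasDerivAt (fun t : ℝ => Real.sqrt ((t - α) ^ 2 + c))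
      ((t - α) / Real.sqrt ((t - α) ^ 2 + c)) t := by
  have h1 : HasDerivAt (fun t : ℝ => (t - α) ^ 2 + c) (2 * (t - α)) t := by
    have := ((hasDerivAt_id t).sub_const α).pow 2
    simpa using this.add_const c
  have h2 : ((t - α) ^ 2 + c) ≠ 0 := by positivity
  have : HasDerivAt (fun t : ℝ => Real.sqrt ((t - α) ^ 2 + c))
      (1 / (2 * Real.sqrt ((t - α) ^ 2 + c)) * (2 * (t - α))) t :=
    (Real.hasDerivAt_sqrt h2).comp t h1
  convert this using 1
  have hs : Real.sqrt ((t - α) ^ 2 + c) > 0 := Real.sqrt_pos.2 (by positivity)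
  ring

lemma F_strictAnti {c k : ℝ} (hc : 0 < c) (hk : 0 < k) (α : ℝ) :
    StrictAnti (fun t : ℝ =>
      Real.sqrt ((t - α) ^ 2 + c) - Real.sqrt ((t + k - α) ^ 2 + c)) := by
  apply strictAnti_of_deriv_neg
  intro t
  have h1 := g_hasDeriv hc α t
  have h2 : HasDerivAt (fun t : ℝ => Real.sqrt ((t + k - α) ^ 2 + c))
      ((t + k - α) / Real.sqrt ((t + k - α) ^ 2 + c)) t := by
    have h3 := g_hasDeriv hc (α - k) t
    convert h3 using 2 <;> ring_nf
  have hD := h1.sub h2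
  rw [show (fun t : ℝ => Real.sqrt ((t - α) ^ 2 + c) - Real.sqrt ((t + k - α) ^ 2 + c)) = ((fun t : ℝ => Real.sqrt ((t - α) ^ 2 + c)) - fun t : ℝ => Real.sqrt ((t + k - α) ^ 2 + c)) from rfl, hD.deriv]
  have := phi_mono hc (show t - α < t + k - α by linarith)
  simp only at this
  linarith

lemma F_bound {c k : ℝ} (hc : 0 < c) (hk : 0 < k) (α t : ℝ) :
    |Real.sqrt ((t - α) ^ 2 + c) - Real.sqrt ((t + k - α) ^ 2 + c)| < k := by
  set u := t - α with hu
  have h1 : (0:ℝ) < u ^ 2 + c := by positivity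
  have h2 : (0:ℝ) < (u + k) ^ 2 + c := by positivity
  have e : t + k - α = u + k := by rw [hu]; ring
  rw [e]
  have hsu : Real.sqrt (u ^ 2 + c) > 0 := Real.sqrt_pos.2 h1
  have hsv : Real.sqrt ((u + k) ^ 2 + c) > 0 := Real.sqrt_pos.2 h2
  have hsu2 : Real.sqrt (u ^ 2 + c) ^ 2 = u ^ 2 + c := Real.sq_sqrt h1.le
  have hsv2 : Real.sqrt ((u + k) ^ 2 + c) ^ 2 = (u + k) ^ 2 + c := Real.sq_sqrt h2.le
  have hu' : |u| < Real.sqrt (u ^ 2 + c) := by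
    rw [← Real.sqrt_sq_eq_abs]
    exact Real.sqrt_lt_sqrt (sq_nonneg u) (by linarith)
  have hv' : |u + k| < Real.sqrt ((u + k) ^ 2 + c) := by
    rw [← Real.sqrt_sq_eq_abs]
    exact Real.sqrt_lt_sqrt (sq_nonneg _) (by linarith)
  rw [abs_lt]
  constructor
  · nlinarith [neg_abs_le u, le_abs_self u]
  · nlinarith [neg_abs_le (u + k), le_abs_self (u + k)]


open scoped RealInnerProductSpace



/-- An integral point set in the plane: finite, not all collinear, all pairwise
distances integers. -/
def IsIntegralPointSet (M : Finset (EuclideanSpace ℝ (Fin 2))) : Prop :=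
  ¬ Collinear ℝ (M : Set (EuclideanSpace ℝ (Fin 2))) ∧
    ∀ p ∈ M, ∀ q ∈ M, ∃ z : ℤ, dist p q = (z : ℝ)

/-- Given an integral point set M in the plane and a straight line m, for each
positive integer k there are at most 2k−1 unordered pairs of points of M on m at
distance exactly k. -/
theorem at_most_two_k_sub_one_segments (M : Finset (EuclideanSpace ℝ (Fin 2)))
    (hM : IsIntegralPointSet M)
    (m : AffineSubspace ℝ (EuclideanSpace ℝ (Fin 2)))
    (hm : ∃ a b : EuclideanSpace ℝ (Fin 2), a ≠ b ∧ m = affineSpan ℝ {a, b})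
    (k : ℕ) (hk : 1 ≤ k) :
    Set.ncard {s : Set (EuclideanSpace ℝ (Fin 2)) |
        ∃ p q, p ∈ M ∧ q ∈ M ∧ p ∈ m ∧ q ∈ m ∧ dist p q = (k : ℝ) ∧ s = {p, q}} ≤
      2 * k - 1 := by
  obtain ⟨hMcol, hMint⟩ := hM
  obtain ⟨a, b, hab, rfl⟩ := hm
  have hk0 : (0:ℝ) < k := by exact_mod_cast hk
  set v := b - a with hvdef
  have hv : v ≠ 0 := sub_ne_zero.2 hab.symm
  set d := ‖v‖⁻¹ • v with hddef
  have hd : ‖d‖ = 1 := by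
    rw [hddef, norm_smul, norm_inv, norm_norm, inv_mul_cancel₀ (norm_ne_zero_iff.2 hv)]
  have hdd : ⟪d, d⟫ = 1 := by
    rw [real_inner_self_eq_norm_sq, hd]; norm_num
  -- membership characterization
  have memm : ∀ x : EuclideanSpace ℝ (Fin 2), x ∈ affineSpan ℝ {a, b} ↔ ∃ t : ℝ, x = t • d + a := by
    intro x
    constructor
    · intro hx
      have hx' : (x - a) +ᵥ a ∈ affineSpan ℝ {a, b} := by
        simpa [vadd_eq_add, sub_add_cancel] using hx
      obtain ⟨s, hs⟩ := vadd_left_mem_affineSpan_pair.1 hx'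
      refine ⟨s * ‖v‖, ?_⟩
      have h1 : (s * ‖v‖) • d = s • v := by
        rw [hddef, smul_smul, mul_assoc, mul_inv_cancel₀ (norm_ne_zero_iff.2 hv), mul_one]
      rw [h1]
      have : s • v = x - a := by rw [hvdef, ← hs, vsub_eq_sub]
      rw [this]; abel
    · rintro ⟨t, rfl⟩
      have h1 : (t * ‖v‖⁻¹) • (b -ᵥ a) = t • d := by
        rw [vsub_eq_sub, ← hvdef, hddef, smul_smul]
      have := vadd_left_mem_affineSpan_pair.2 ⟨t * ‖v‖⁻¹, h1⟩
      simpa [vadd_eq_add] using this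
  -- uniqueness of coordinate
  have coordinj : ∀ t s : ℝ, t • d + a = s • d + a → t = s := by
    intro t s h
    have : t • d = s • d := by
      have := sub_eq_sub_iff_sub_eq_sub.1 (congrArg (· - a) h)
      simpa using h
    have := sub_eq_zero.2 this
    rw [← sub_smul] at this
    rcases smul_eq_zero.1 this with h' | h'
    · linarith [sub_eq_zero.1 (by linarith [h'] : t - s = 0)]
    · exact absurd (norm_eq_zero.2 h' ▸ hd) (by norm_num [h', hd])
  -- a point of M off the line
  obtain ⟨r, hrM, hrm⟩ : ∃ r ∈ M, r ∉ affineSpan ℝ ({a, b} : Set (EuclideanSpace ℝ (Fin 2))) := by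
    by_contra h
    push_neg at h
    apply hMcol
    rw [collinear_iff_exists_forall_eq_smul_vadd]
    refine ⟨a, d, fun p hp => ?_⟩
    obtain ⟨t, ht⟩ := (memm p).1 (h p hp)
    exact ⟨t, by rw [vadd_eq_add, ← ht]⟩
  set w := r - a with hwdef
  set α := ⟪w, d⟫ with hαdef
  set c := ‖w‖ ^ 2 - α ^ 2 with hcdef
  have hcsq : c = ‖w - α • d‖ ^ 2 := by
    rw [norm_sub_sq_real, real_inner_smul_right, norm_smul, mul_pow, hd, ← hαdef, hcdef, Real.norm_eq_abs, sq_abs]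
    ring
  have hc : 0 < c := by
    rcases eq_or_lt_of_le (by rw [hcsq]; positivity : (0:ℝ) ≤ c) with h0 | h0
    · exfalso
      have : ‖w - α • d‖ = 0 := by
        have := hcsq ▸ h0.symm
        nlinarith [norm_nonneg (w - α • d)]
      have hw : w = α • d := by
        have := norm_eq_zero.1 this
        linear_combination (norm := abel) this
      apply hrm
      rw [memm r]
      exact ⟨α, by rw [← hw, hwdef]; abel⟩
    · exact h0
  -- distance from r to points of the line
  have hdistr : ∀ t : ℝ, dist r (t • d + a) = Real.sqrt ((t - α) ^ 2 + c) := by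
    intro t
    have h1 : r - (t • d + a) = w - t • d := by rw [hwdef]; abel
    have h2 : ‖w - t • d‖ ^ 2 = (t - α) ^ 2 + c := by
      rw [norm_sub_sq_real, real_inner_smul_right, norm_smul, mul_pow, hd, ← hαdef, hcdef, Real.norm_eq_abs, sq_abs]
      ring
    rw [dist_eq_norm, h1, ← Real.sqrt_sq (norm_nonneg (w - t • d)), h2]
  -- distance between points of the line
  have hdistline : ∀ t s : ℝ, dist (t • d + a) (s • d + a) = |t - s| := by
    intro t s
    have h1 : (t • d + a) - (s • d + a) = (t - s) • d := by rw [sub_smul]; abel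
    rw [dist_eq_norm, h1, norm_smul, hd, mul_one, Real.norm_eq_abs]
  have hinner : ∀ t s : ℝ, ⟪d, (s • d + a) - (t • d + a)⟫ = s - t := by
    intro t s
    have h1 : (s • d + a) - (t • d + a) = (s - t) • d := by rw [sub_smul]; abel
    rw [h1, real_inner_smul_right, hdd, mul_one]
  -- the set of ordered pairs
  set T : Set (EuclideanSpace ℝ (Fin 2) × EuclideanSpace ℝ (Fin 2)) :=
    {x | x.1 ∈ M ∧ x.2 ∈ M ∧ x.1 ∈ affineSpan ℝ {a, b} ∧ x.2 ∈ affineSpan ℝ {a, b} ∧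
      dist x.1 x.2 = (k:ℝ) ∧ 0 < ⟪d, x.2 - x.1⟫} with hTdef
  have hTfin : T.Finite := by
    apply Set.Finite.subset (M ×ˢ M).finite_toSet
    rintro ⟨p, q⟩ ⟨h1, h2, -⟩
    simp only [Finset.coe_product, Set.mem_prod]
    exact ⟨h1, h2⟩
  have hTco : ∀ p q, (p, q) ∈ T → ∃ t : ℝ, p = t • d + a ∧ q = (t + k) • d + a := by
    rintro p q ⟨-, -, hpm, hqm, hdpq, hpos⟩
    obtain ⟨tp, rfl⟩ := (memm p).1 hpm
    obtain ⟨tq, rfl⟩ := (memm q).1 hqm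
    rw [hinner] at hpos
    rw [hdistline] at hdpq
    rw [abs_of_neg (by linarith)] at hdpq
    exact ⟨tp, rfl, by rw [show tp + (k:ℝ) = tq by linarith]⟩
  set F : ℝ → ℝ := fun t => Real.sqrt ((t - α) ^ 2 + c)
    - Real.sqrt ((t + k - α) ^ 2 + c) with hFdef
  have hFanti := F_strictAnti hc hk0 α
  set f : EuclideanSpace ℝ (Fin 2) × EuclideanSpace ℝ (Fin 2) → ℝ :=
    fun x => dist r x.1 - dist r x.2 with hfdef
  have hfF : ∀ t : ℝ, f (t • d + a, (t + k) • d + a) = F t := by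
    intro t
    simp only [hfdef, hFdef]
    rw [hdistr, hdistr]
  have hinj : Set.InjOn f T := by
    intro x hx y hy hxy
    obtain ⟨p, q⟩ := x
    obtain ⟨p', q'⟩ := y
    obtain ⟨tx, hx1, hx2⟩ := hTco p q hx
    obtain ⟨ty, hy1, hy2⟩ := hTco p' q' hy
    subst hx1; subst hx2; subst hy1; subst hy2
    rw [hfF, hfF] at hxy
    have : tx = ty := hFanti.injective hxy
    rw [this]
  set A : Set ℝ := (fun z : ℤ => (z:ℝ)) '' (Set.Ioo (-(k:ℤ)) (k:ℤ)) with hAdef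
  have hAfin : A.Finite := (Set.finite_Ioo _ _).image _
  have hmaps : ∀ x ∈ T, f x ∈ A := by
    rintro ⟨p, q⟩ hx
    obtain ⟨zp, hzp⟩ := hMint r hrM p hx.1
    obtain ⟨zq, hzq⟩ := hMint r hrM q hx.2.1
    obtain ⟨t, h1, h2⟩ := hTco p q hx
    subst h1; subst h2
    have hb : |F t| < k := F_bound hc hk0 α t
    rw [← hfF t] at hb
    have hfz : f (t • d + a, (t + k) • d + a) = ((zp - zq : ℤ) : ℝ) := by
      simp only [hfdef]
      push_cast
      rw [hzp, hzq]
    rw [hfz] at hb ⊢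
    refine ⟨zp - zq, ?_, rfl⟩
    rw [abs_lt] at hb
    constructor
    · exact_mod_cast hb.1
    · exact_mod_cast hb.2
  have hSsub : {s : Set (EuclideanSpace ℝ (Fin 2)) |
        ∃ p q, p ∈ M ∧ q ∈ M ∧ p ∈ affineSpan ℝ {a, b} ∧ q ∈ affineSpan ℝ {a, b} ∧
          dist p q = (k : ℝ) ∧ s = {p, q}} ⊆
      (fun x : EuclideanSpace ℝ (Fin 2) × EuclideanSpace ℝ (Fin 2) =>
        ({x.1, x.2} : Set (EuclideanSpace ℝ (Fin 2)))) '' T := by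
    rintro s ⟨p, q, hpM, hqM, hpm, hqm, hdpq, rfl⟩
    obtain ⟨tp, rfl⟩ := (memm p).1 hpm
    obtain ⟨tq, rfl⟩ := (memm q).1 hqm
    have hne : tp ≠ tq := by
      intro h
      rw [h, hdistline, sub_self, abs_zero] at hdpq
      linarith
    rcases hne.lt_or_gt with h | h
    · exact ⟨(tp • d + a, tq • d + a), ⟨hpM, hqM, hpm, hqm, hdpq,
        by rw [hinner]; linarith⟩, rfl⟩
    · refine ⟨(tq • d + a, tp • d + a), ⟨hqM, hpM, hqm, hpm,
        by rw [dist_comm]; exact hdpq, by rw [hinner]; linarith⟩, ?_⟩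
      simp only
      rw [Set.pair_comm]
  have hAcard : A.ncard = 2 * k - 1 := by
    rw [hAdef, Set.ncard_image_of_injective _ Int.cast_injective, ← Finset.coe_Ioo,
      Set.ncard_coe_finset, Int.card_Ioo]
    omega
  calc Set.ncard {s : Set (EuclideanSpace ℝ (Fin 2)) |
        ∃ p q, p ∈ M ∧ q ∈ M ∧ p ∈ affineSpan ℝ {a, b} ∧ q ∈ affineSpan ℝ {a, b} ∧
          dist p q = (k : ℝ) ∧ s = {p, q}}
      ≤ ((fun x : EuclideanSpace ℝ (Fin 2) × EuclideanSpace ℝ (Fin 2) =>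
          ({x.1, x.2} : Set (EuclideanSpace ℝ (Fin 2)))) '' T).ncard :=
        Set.ncard_le_ncard hSsub (hTfin.image _)
    _ ≤ T.ncard := Set.ncard_image_le hTfin
    _ = (f '' T).ncard := (Set.ncard_image_of_injOn hinj).symm
    _ ≤ A.ncard := Set.ncard_le_ncard (Set.image_subset_iff.2 hmaps) hAfin
    _ = 2 * k - 1 := hAcard
end

section
/- Let M be an integral point set in the plane and let m be a straight line. Then there is at most one pair of points M₁, M₂ ∈ M ∩ m with |M₁M₂| = 1. -/
private lemma equi_coord (w v : EuclideanSpace ℝ (Fin 2)) (t u : ℝ)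
    (h : ‖w - t • v‖ = ‖w - u • v‖)
    (htu : t ≠ u) : 2 * inner ℝ w v = (t + u) * ‖v‖ ^ 2 := by
  have h2 : ‖w - t • v‖ ^ 2 = ‖w - u • v‖ ^ 2 := by rw [h]
  rw [norm_sub_sq_real, norm_sub_sq_real, real_inner_smul_right, real_inner_smul_right,
    norm_smul, norm_smul] at h2
  simp only [Real.norm_eq_abs, mul_pow, sq_abs] at h2
  have h3 : (u - t) * (2 * (inner ℝ w v : ℝ) - (t + u) * ‖v‖ ^ 2) = 0 := by linear_combination h2
  rcases mul_eq_zero.mp h3 with h4 | h4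
  · exact absurd (sub_eq_zero.mp h4).symm htu
  · linarith

/-- A point not on the line through `p` and `q`, at integer distances from both,
with `dist p q = 1`, is equidistant from them. -/
private lemma equidistant_of_off_line {m : AffineSubspace ℝ (EuclideanSpace ℝ (Fin 2))}
    {p q c : EuclideanSpace ℝ (Fin 2)} (hpm : p ∈ m) (hqm : q ∈ m) (hcm : c ∉ m)
    (hpq : dist p q = 1) (h1 : ∃ z : ℤ, dist c p = (z : ℝ)) (h2 : ∃ z : ℤ, dist c q = (z : ℝ)) :
    dist c p = dist c q := by
  have hne : p ≠ q := by
    intro h; rw [h] at hpq; simp at hpq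
  by_contra hcc
  obtain ⟨z1, hz1⟩ := h1
  obtain ⟨z2, hz2⟩ := h2
  have habs : |dist c p - dist c q| ≤ dist p q := by
    have := abs_dist_sub_le p q c
    rwa [dist_comm p c, dist_comm q c] at this
  have hzne : z1 ≠ z2 := by
    intro h; apply hcc; rw [hz1, hz2, h]
  have hge : (1 : ℝ) ≤ |dist c p - dist c q| := by
    rw [hz1, hz2]
    have : (1 : ℤ) ≤ |z1 - z2| := Int.one_le_abs (sub_ne_zero.mpr hzne)
    calc (1:ℝ) ≤ (|z1 - z2| : ℤ) := by exact_mod_cast this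
    _ = |(z1 : ℝ) - z2| := by push_cast; ring
  have heq : |dist c p - dist c q| = 1 := le_antisymm (hpq ▸ habs) hge
  have hcol : Collinear ℝ ({c, p, q} : Set (EuclideanSpace ℝ (Fin 2))) := by
    rcases abs_eq (by norm_num : (0:ℝ) ≤ 1) |>.mp heq with h | h
    · -- dist c p = dist c q + 1 = dist c q + dist q p
      have : dist c q + dist q p = dist c p := by rw [dist_comm q p, hpq]; linarith
      have hw : Wbtw ℝ c q p := dist_add_dist_eq_iff.mp this
      have := hw.collinear
      exact this.subset (by intro x hx; simp at hx; rcases hx with h|h|h <;> simp [h])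
    · have : dist c p + dist p q = dist c q := by rw [hpq]; linarith
      have hw : Wbtw ℝ c p q := dist_add_dist_eq_iff.mp this
      exact hw.collinear
  have hcmem : c ∈ line[ℝ, p, q] :=
    hcol.mem_affineSpan_of_mem_of_ne (by simp) (by simp) (by simp) hne
  have hle : line[ℝ, p, q] ≤ m := affineSpan_le.mpr (by
    intro x hx; rcases hx with h | h
    · exact h ▸ hpm
    · simp at h; exact h ▸ hqm)
  exact hcm (hle hcmem)

/-- Given an integral point set M in the plane and a straight line m, there is at
most one pair of points of M on m at distance 1. -/
theorem at_most_one_unit_pair_on_line (M : Finset (EuclideanSpace ℝ (Fin 2)))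
    (hM : IsIntegralPointSet M)
    (m : AffineSubspace ℝ (EuclideanSpace ℝ (Fin 2)))
    (hm : ∃ a b : EuclideanSpace ℝ (Fin 2), a ≠ b ∧ m = affineSpan ℝ {a, b})
    (p q r s : EuclideanSpace ℝ (Fin 2))
    (hp : p ∈ M) (hq : q ∈ M) (hr : r ∈ M) (hs : s ∈ M)
    (hpm : p ∈ m) (hqm : q ∈ m) (hrm : r ∈ m) (hsm : s ∈ m)
    (hpq : dist p q = 1) (hrs : dist r s = 1) :
    ({p, q} : Set (EuclideanSpace ℝ (Fin 2))) = {r, s} := by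
  obtain ⟨a, b, hab, hmeq⟩ := hm
  set v : EuclideanSpace ℝ (Fin 2) := b - a with hv
  have hvne : v ≠ 0 := sub_ne_zero.mpr (Ne.symm hab)
  have ham : a ∈ m := hmeq ▸ left_mem_affineSpan_pair ℝ a b
  -- coordinates
  have coord : ∀ x ∈ m, ∃ t : ℝ, x = t • v + a := by
    intro x hxm
    have hd : x -ᵥ a ∈ m.direction := AffineSubspace.vsub_mem_direction hxm ham
    rw [hmeq, direction_affineSpan, mem_vectorSpan_pair_rev] at hd
    obtain ⟨t, ht⟩ := hd
    simp only [vsub_eq_sub] at ht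
    exact ⟨t, by rw [hv, ht]; abel⟩
  obtain ⟨tp, htp⟩ := coord p hpm
  obtain ⟨tq, htq⟩ := coord q hqm
  obtain ⟨tr, htr⟩ := coord r hrm
  obtain ⟨ts, hts⟩ := coord s hsm
  -- dist in coordinates
  have hdist : ∀ t u : ℝ, dist (t • v + a) (u • v + a) = |t - u| * ‖v‖ := by
    intro t u
    rw [dist_eq_norm]
    have : t • v + a - (u • v + a) = (t - u) • v := by rw [sub_smul]; abel
    rw [this, norm_smul, Real.norm_eq_abs]
  have htpq : tp ≠ tq := by
    intro h
    rw [htp, htq, h] at hpq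
    rw [hdist] at hpq; simp at hpq
  have htrs : tr ≠ ts := by
    intro h
    rw [htr, hts, h] at hrs
    rw [hdist] at hrs; simp at hrs
  -- a point of M off the line
  have hcol : Collinear ℝ (m : Set (EuclideanSpace ℝ (Fin 2))) := by
    have h2 : Collinear ℝ ({a, b} : Set (EuclideanSpace ℝ (Fin 2))) := collinear_pair ℝ a b
    rw [Collinear] at h2 ⊢
    rwa [← direction_affineSpan, AffineSubspace.affineSpan_coe, hmeq, direction_affineSpan]
  obtain ⟨c, hcM, hcm⟩ : ∃ c ∈ M, c ∉ m := by
    by_contra h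
    push_neg at h
    exact hM.1 (hcol.subset h)
  -- equidistance
  have e1 : dist c p = dist c q :=
    equidistant_of_off_line hpm hqm hcm hpq
      ⟨(hM.2 c hcM p hp).choose, (hM.2 c hcM p hp).choose_spec⟩
      ⟨(hM.2 c hcM q hq).choose, (hM.2 c hcM q hq).choose_spec⟩
  have e2 : dist c r = dist c s :=
    equidistant_of_off_line hrm hsm hcm hrs
      ⟨(hM.2 c hcM r hr).choose, (hM.2 c hcM r hr).choose_spec⟩
      ⟨(hM.2 c hcM s hs).choose, (hM.2 c hcM s hs).choose_spec⟩
  -- translate to inner products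
  set w : EuclideanSpace ℝ (Fin 2) := c - a with hw
  have hnorm : ∀ t : ℝ, ∀ x : EuclideanSpace ℝ (Fin 2), x = t • v + a → dist c x = ‖w - t • v‖ := by
    intro t x hx
    rw [dist_eq_norm, hx, hw]
    congr 1
    abel
  have i1 : 2 * (inner ℝ w v : ℝ) = (tp + tq) * ‖v‖ ^ 2 := by
    apply equi_coord _ _ _ _ _ htpq
    rw [← hnorm tp p htp, ← hnorm tq q htq]; exact e1
  have i2 : 2 * (inner ℝ w v : ℝ) = (tr + ts) * ‖v‖ ^ 2 := by
    apply equi_coord _ _ _ _ _ htrs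
    rw [← hnorm tr r htr, ← hnorm ts s hts]; exact e2
  have hN : ‖v‖ ^ 2 ≠ 0 := pow_ne_zero _ (norm_ne_zero_iff.mpr hvne)
  have hsum : tp + tq = tr + ts := by
    have := i1.symm.trans i2
    exact mul_right_cancel₀ hN this
  have hdiff : |tp - tq| = |tr - ts| := by
    have h1 : |tp - tq| * ‖v‖ = 1 := by rw [← hdist, ← htp, ← htq]; exact hpq
    have h2 : |tr - ts| * ‖v‖ = 1 := by rw [← hdist, ← htr, ← hts]; exact hrs
    have hvn : ‖v‖ ≠ 0 := norm_ne_zero_iff.mpr hvne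
    exact mul_right_cancel₀ hvn (h1.trans h2.symm)
  rcases abs_eq_abs.mp hdiff with h | h
  · have h1 : tp = tr := by linarith
    have h2 : tq = ts := by linarith
    rw [htp, htq, htr, hts, h1, h2]
  · have h1 : tp = ts := by linarith
    have h2 : tq = tr := by linarith
    rw [htp, htq, htr, hts, h1, h2, Set.pair_comm]
end

section
/- Let Δ be a straight line segment of length l in the plane, let M be an integral point set in the plane, and suppose Δ contains exactly n² + 1 points of M for some positive integer n. Then l ≥ (2/3)n³ + (1/2)n² − (1/6)n. -/
noncomputable section
namespace IPSAux

local notation "V2" => EuclideanSpace ℝ (Fin 2)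

/-- Membership in the line through `A` and `B`. -/
def OnLine (A B P : V2) : Prop := ∃ r : ℝ, P = A + r • (B - A)

variable {A B P p q x y : V2} {l : ℝ}

lemma param (hl : dist A B = l) (hlpos : 0 < l) (hp : p ∈ segment ℝ A B) :
    ∃ θ : ℝ, 0 ≤ θ ∧ θ ≤ 1 ∧ p = A + θ • (B - A) ∧ dist A p = θ * l := by
  rw [segment_eq_image'] at hp
  obtain ⟨θ, ⟨h0, h1⟩, rfl⟩ := hp
  have hBA : ‖B - A‖ = l := by rw [← hl, dist_comm, dist_eq_norm]
  refine ⟨θ, h0, h1, rfl, ?_⟩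
  rw [dist_eq_norm]
  have : A - (A + θ • (B - A)) = -(θ • (B - A)) := by abel
  rw [this, norm_neg, norm_smul, hBA, Real.norm_eq_abs, abs_of_nonneg h0]

lemma seg_onLine (hp : p ∈ segment ℝ A B) : OnLine A B p := by
  rw [segment_eq_image'] at hp
  obtain ⟨θ, _, rfl⟩ := hp
  exact ⟨θ, rfl⟩

lemma dist_eq_abs (hl : dist A B = l) (hlpos : 0 < l) (hp : p ∈ segment ℝ A B)
    (hq : q ∈ segment ℝ A B) : dist p q = |dist A p - dist A q| := by
  obtain ⟨θ, _, _, hpe, hpd⟩ := param hl hlpos hp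
  obtain ⟨θ', _, _, hqe, hqd⟩ := param hl hlpos hq
  have hBA : ‖B - A‖ = l := by rw [← hl, dist_comm, dist_eq_norm]
  rw [hpd, hqd, dist_eq_norm, hpe, hqe]
  have : A + θ • (B - A) - (A + θ' • (B - A)) = (θ - θ') • (B - A) := by module
  rw [this, norm_smul, hBA, Real.norm_eq_abs, ← sub_mul, abs_mul, abs_of_pos hlpos]

lemma ray_lemma (hl : dist A B = l) (hlpos : 0 < l) (hP : ¬ OnLine A B P)
    (hx : x ∈ segment ℝ A B) (hy : y ∈ segment ℝ A B) (c : ℝ)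
    (h : P - x = c • (y - x)) : False := by
  obtain ⟨θ, _, _, hxe, _⟩ := param hl hlpos hx
  obtain ⟨θ', _, _, hye, _⟩ := param hl hlpos hy
  apply hP
  refine ⟨θ + c * (θ' - θ), ?_⟩
  have hPe : P = x + c • (y - x) := by linear_combination (norm := module) h
  rw [hPe, hxe, hye]
  match_scalars <;> ring

lemma no_scale (hl : dist A B = l) (hlpos : 0 < l) (hP : ¬ OnLine A B P)
    (hx : x ∈ segment ℝ A B) (hy : y ∈ segment ℝ A B) (hxy : x ≠ y) (c : ℝ)
    (h : P - y = c • (P - x)) : False := by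
  have hc1 : c ≠ 1 := by
    rintro rfl
    rw [one_smul] at h
    exact hxy (by linear_combination (norm := module) h)
  have h2 : P - x = (1 - c)⁻¹ • (y - x) := by
    have h3 : (1 - c) • (P - x) = y - x := by linear_combination (norm := module) h
    rw [← h3, smul_smul, inv_mul_cancel₀ (by intro hh; apply hc1; linarith), one_smul]
  exact ray_lemma hl hlpos hP hx hy _ h2

lemma P_ne (hP : ¬ OnLine A B P) (hx : x ∈ segment ℝ A B) : P - x ≠ 0 := by
  intro h
  exact hP (by rw [sub_eq_zero] at h; exact h ▸ seg_onLine hx)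

lemma triangle (hl : dist A B = l) (hlpos : 0 < l) (hP : ¬ OnLine A B P)
    (hx : x ∈ segment ℝ A B) (hy : y ∈ segment ℝ A B) (hxy : x ≠ y) :
    dist P y < dist P x + dist x y := by
  have key : ¬ SameRay ℝ (P - x) (x - y) := by
    intro hSR
    obtain ⟨r, hr, hre⟩ := hSR.exists_pos_left (P_ne hP hx)
      (fun h => hxy (by rwa [sub_eq_zero] at h))
    refine ray_lemma hl hlpos hP hx hy (-r⁻¹) ?_
    have : P - x = r⁻¹ • (x - y) := by
      rw [← hre, smul_smul, inv_mul_cancel₀ hr.ne', one_smul]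
    rw [this]; module
  have := norm_add_lt_of_not_sameRay key
  rw [dist_eq_norm, dist_eq_norm, dist_eq_norm]
  calc ‖P - y‖ = ‖(P - x) + (x - y)‖ := by rw [sub_add_sub_cancel]
  _ < ‖P - x‖ + ‖x - y‖ := this

lemma strict_conv (hl : dist A B = l) (hlpos : 0 < l) (hP : ¬ OnLine A B P)
    (hx : x ∈ segment ℝ A B) (hy : y ∈ segment ℝ A B) (hxy : x ≠ y) {a b : ℝ}
    (ha : 0 < a) (hb : 0 < b) (hab : a + b = 1) {z : V2} (hz : z = a • x + b • y) :
    dist P z < a * dist P x + b * dist P y := by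
  have key : ¬ SameRay ℝ (a • (P - x)) (b • (P - y)) := by
    intro hSR
    have hu : a • (P - x) ≠ 0 := smul_ne_zero ha.ne' (P_ne hP hx)
    have hv : b • (P - y) ≠ 0 := smul_ne_zero hb.ne' (P_ne hP hy)
    obtain ⟨r, hr, hre⟩ := hSR.exists_pos_left hu hv
    have h5 : (r * a) • (P - x) = b • (P - y) := by rw [← hre, smul_smul]
    have h4 := congrArg (fun w => b⁻¹ • w) h5
    simp only [smul_smul, inv_mul_cancel₀ hb.ne', one_smul] at h4
    exact no_scale hl hlpos hP hx hy hxy (b⁻¹ * (r * a)) h4.symm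
  have h1 : P - z = a • (P - x) + b • (P - y) := by
    rw [hz]; match_scalars <;> linarith
  have := norm_add_lt_of_not_sameRay key
  rw [dist_eq_norm, dist_eq_norm, dist_eq_norm, h1]
  calc ‖a • (P - x) + b • (P - y)‖ < ‖a • (P - x)‖ + ‖b • (P - y)‖ := this
  _ = a * ‖P - x‖ + b * ‖P - y‖ := by
      rw [norm_smul, norm_smul, Real.norm_eq_abs, Real.norm_eq_abs,
        abs_of_pos ha, abs_of_pos hb]

open Finset in
lemma sum_range_odd (n : ℕ) : ∑ k ∈ Finset.range n, (2*k - 1) = (n-1)^2 := by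
  induction n with
  | zero => simp
  | succ m ih =>
    rw [Finset.sum_range_succ, ih]
    cases m with
    | zero => simp
    | succ m' => simp [Nat.succ_sub_one]; ring_nf; omega

lemma sum_range_sq (n : ℕ) :
    ∑ m ∈ Finset.range n, (m:ℝ)^2 = (2*(n:ℝ)^3 - 3*n^2 + n)/6 := by
  induction n with
  | zero => simp
  | succ m ih => rw [Finset.sum_range_succ, ih]; push_cast; ring

open Finset in
lemma counting (n : ℕ) (hn : 1 ≤ n) (D : Fin (n^2) → ℕ) (hD1 : ∀ i, 1 ≤ D i)
    (hcount : ∀ k, (univ.filter fun i => D i = k).card ≤ 2*k - 1) :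
    (2 / 3 : ℝ) * n ^ 3 + (1 / 2 : ℝ) * n ^ 2 - (1 / 6 : ℝ) * n
      ≤ ∑ i : Fin (n^2), (D i : ℝ) := by
  classical
  have stepa : ∀ j, 1 ≤ j → n^2 ≤ (univ.filter fun i => j ≤ D i).card + (j-1)^2 := by
    intro j hj
    have hsplit := Finset.card_filter_add_card_filter_not
      (s := (univ : Finset (Fin (n^2)))) (p := fun i => j ≤ D i)
    have hsub : (univ.filter fun i => ¬ j ≤ D i)
        ⊆ (Finset.range j).biUnion (fun k => univ.filter fun i => D i = k) := by
      intro i hi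
      simp only [Finset.mem_filter, Finset.mem_univ, true_and, not_le] at hi
      simp only [Finset.mem_biUnion, Finset.mem_range, Finset.mem_filter, Finset.mem_univ,
        true_and]
      exact ⟨D i, hi, rfl⟩
    have hneg : (univ.filter fun i => ¬ j ≤ D i).card ≤ (j-1)^2 := by
      calc (univ.filter fun i => ¬ j ≤ D i).card
          ≤ ((Finset.range j).biUnion (fun k => univ.filter fun i => D i = k)).card :=
            Finset.card_le_card hsub
        _ ≤ ∑ k ∈ Finset.range j, (univ.filter fun i => D i = k).card :=
            Finset.card_biUnion_le
        _ ≤ ∑ k ∈ Finset.range j, (2*k - 1) := Finset.sum_le_sum fun k _ => hcount k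
        _ = (j-1)^2 := sum_range_odd j
    have hcardu : (univ : Finset (Fin (n^2))).card = n^2 := by simp
    omega
  have stepb : ∑ j ∈ Finset.Icc 1 n, (univ.filter fun i => j ≤ D i).card
      ≤ ∑ i : Fin (n^2), D i := by
    have : ∀ j, (univ.filter fun i => j ≤ D i).card
        = ∑ i : Fin (n^2), if j ≤ D i then 1 else 0 := fun j => Finset.card_filter _ _
    simp_rw [this]
    rw [Finset.sum_comm]
    apply Finset.sum_le_sum
    intro i _
    have : ∑ j ∈ Finset.Icc 1 n, (if j ≤ D i then 1 else 0)
        = ((Finset.Icc 1 n).filter fun j => j ≤ D i).card := (Finset.card_filter _ _).symm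
    rw [this]
    calc ((Finset.Icc 1 n).filter fun j => j ≤ D i).card
        ≤ (Finset.Icc 1 (D i)).card := by
          apply Finset.card_le_card
          intro j hj
          simp only [Finset.mem_filter, Finset.mem_Icc] at hj ⊢
          exact ⟨hj.1.1, hj.2⟩
      _ = D i := by rw [Nat.card_Icc]; omega
  have hreal : ∀ j ∈ Finset.Icc 1 n,
      (n:ℝ)^2 - ((j:ℝ)-1)^2 ≤ ((univ.filter fun i => j ≤ D i).card : ℝ) := by
    intro j hj
    simp only [Finset.mem_Icc] at hj
    have hj1 : ((j-1:ℕ):ℝ) = (j:ℝ) - 1 := by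
      have : 1 ≤ j := hj.1; push_cast [this]; ring
    have := (Nat.cast_le (α := ℝ)).2 (stepa j hj.1)
    push_cast at this
    rw [← hj1]; push_cast
    nlinarith [this]
  calc (2 / 3 : ℝ) * n ^ 3 + (1 / 2 : ℝ) * n ^ 2 - (1 / 6 : ℝ) * n
      = ∑ j ∈ Finset.Icc 1 n, ((n:ℝ)^2 - ((j:ℝ)-1)^2) := by
        rw [Finset.sum_sub_distrib, Finset.sum_const, Nat.card_Icc]
        have : ∑ j ∈ Finset.Icc 1 n, ((j:ℝ)-1)^2 = ∑ m ∈ Finset.range n, (m:ℝ)^2 := by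
          rw [← Finset.Ico_add_one_right_eq_Icc, Finset.sum_Ico_eq_sum_range]
          apply Finset.sum_congr (by simp)
          intro m _
          push_cast; ring
        rw [this, sum_range_sq]
        simp only [Nat.add_sub_cancel, nsmul_eq_mul]
        ring
    _ ≤ ∑ j ∈ Finset.Icc 1 n, ((univ.filter fun i => j ≤ D i).card : ℝ) :=
        Finset.sum_le_sum hreal
    _ ≤ ∑ i : Fin (n^2), (D i : ℝ) := by
        rw [← Nat.cast_sum, ← Nat.cast_sum]
        exact_mod_cast stepb

end IPSAux
end

set_option maxHeartbeats 1600000 in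
open IPSAux Finset in
/-- If a straight line segment of length l contains exactly n² + 1 points of an
integral point set M in the plane, then l ≥ (2/3)n³ + (1/2)n² − (1/6)n. -/
theorem segment_length_n_sq_plus_one_points (M : Finset (EuclideanSpace ℝ (Fin 2)))
    (hM : IsIntegralPointSet M) (A B : EuclideanSpace ℝ (Fin 2)) (l : ℝ)
    (hl : dist A B = l) (n : ℕ) (hn : 1 ≤ n)
    (hcard : (segment ℝ A B ∩ (M : Set (EuclideanSpace ℝ (Fin 2)))).ncard = n ^ 2 + 1) :
    (2 / 3 : ℝ) * n ^ 3 + (1 / 2 : ℝ) * n ^ 2 - (1 / 6 : ℝ) * n ≤ l := by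
  classical
  obtain ⟨hMnc, hMint⟩ := hM
  have hl0 : (0:ℝ) ≤ l := hl ▸ dist_nonneg
  have hn2 : 1 ≤ n ^ 2 := Nat.one_le_pow _ _ (by omega)
  -- the segment is nondegenerate
  by_cases hAB : A = B
  · exfalso
    have hsub : segment ℝ A B ∩ (M : Set (EuclideanSpace ℝ (Fin 2))) ⊆ {A} := by
      rw [hAB, segment_same]; exact Set.inter_subset_left
    have h1 : (segment ℝ A B ∩ (M : Set (EuclideanSpace ℝ (Fin 2)))).ncard ≤ 1 := by
      calc _ ≤ ({A} : Set (EuclideanSpace ℝ (Fin 2))).ncard :=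
            Set.ncard_le_ncard hsub (Set.finite_singleton A)
        _ = 1 := Set.ncard_singleton A
    omega
  have hlpos : 0 < l := by
    rcases lt_or_eq_of_le hl0 with h | h
    · exact h
    · exact absurd (dist_eq_zero.mp (by rw [hl, ← h])) hAB
  -- the intersection as a finset
  set T : Finset (EuclideanSpace ℝ (Fin 2)) := M.filter (fun p => p ∈ segment ℝ A B) with hT
  have hTset : (T : Set (EuclideanSpace ℝ (Fin 2)))
      = segment ℝ A B ∩ (M : Set (EuclideanSpace ℝ (Fin 2))) := by
    ext q; simp only [hT, Finset.coe_filter, Set.mem_setOf_eq, Set.mem_inter_iff,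
      Finset.mem_coe, Finset.mem_filter]
    tauto
  have hTcard : T.card = n ^ 2 + 1 := by
    rw [← Set.ncard_coe_finset T, hTset, hcard]
  have hTseg : ∀ q ∈ T, q ∈ segment ℝ A B := fun q hq => (Finset.mem_filter.mp hq).2
  have hTM : ∀ q ∈ T, q ∈ M := fun q hq => (Finset.mem_filter.mp hq).1
  -- distance to A is injective on T
  have hinj : ∀ p ∈ T, ∀ q ∈ T, dist A p = dist A q → p = q := by
    intro p hp q hq h
    have := dist_eq_abs hl hlpos (hTseg p hp) (hTseg q hq)
    rw [h, sub_self, abs_zero] at this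
    exact dist_eq_zero.mp this
  -- sorted enumeration of the distances
  have hTimgcard : (T.image (fun q => dist A q)).card = n ^ 2 + 1 := by
    rw [Finset.card_image_of_injOn (fun p hp q hq h => hinj p hp q hq h), hTcard]
  have e : Fin (n ^ 2 + 1) ≃o { x // x ∈ T.image (fun q => dist A q) } :=
    (T.image (fun q => dist A q)).orderIsoOfFin hTimgcard
  set t : Fin (n ^ 2 + 1) → ℝ := fun i => (e i : ℝ) with ht
  have htmono : StrictMono t := fun i j h => Subtype.coe_lt_coe.mpr (e.strictMono h)
  have htmem : ∀ i, t i ∈ T.image (fun q => dist A q) := fun i => (e i).2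
  -- choose points realizing each distance
  have hpex : ∀ i, ∃ q, q ∈ T ∧ dist A q = t i := by
    intro i
    obtain ⟨a, ha, hae⟩ := Finset.mem_image.mp (htmem i)
    exact ⟨a, ha, hae⟩
  choose p hpT hpt using hpex
  have hpseg : ∀ i, p i ∈ segment ℝ A B := fun i => hTseg _ (hpT i)
  have hpM : ∀ i, p i ∈ M := fun i => hTM _ (hpT i)
  -- an off-line point of M
  have hPex : ∃ P ∈ M, ¬ OnLine A B P := by
    by_contra h
    push_neg at h
    apply hMnc
    rw [collinear_iff_exists_forall_eq_smul_vadd]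
    refine ⟨A, B - A, fun q hq => ?_⟩
    obtain ⟨r, hr⟩ := h q hq
    exact ⟨r, by rw [hr]; simp only [vadd_eq_add]; abel⟩
  obtain ⟨P, hPM, hPoff⟩ := hPex
  -- integer distances to P
  have hwex : ∀ i : Fin (n ^ 2 + 1), ∃ z : ℤ, dist P (p i) = (z : ℝ) :=
    fun i => hMint P hPM (p i) (hpM i)
  choose w hw using hwex
  -- integer gaps
  have hzex : ∀ i : Fin (n ^ 2), ∃ z : ℤ, dist (p i.castSucc) (p i.succ) = (z : ℝ) :=
    fun i => hMint _ (hpM i.castSucc) _ (hpM i.succ)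
  choose z hz using hzex
  set D : Fin (n ^ 2) → ℕ := fun i => (z i).toNat with hDdef
  have hgap_pos : ∀ i : Fin (n ^ 2), t i.castSucc < t i.succ :=
    fun i => htmono (Fin.castSucc_lt_succ (i := i))
  have hgap : ∀ i : Fin (n ^ 2), dist (p i.castSucc) (p i.succ) = t i.succ - t i.castSucc := by
    intro i
    rw [dist_eq_abs hl hlpos (hpseg i.castSucc) (hpseg i.succ), hpt, hpt,
      abs_sub_comm, abs_of_pos (by linarith [hgap_pos i])]
  have hDr : ∀ i : Fin (n ^ 2), (D i : ℝ) = t i.succ - t i.castSucc := by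
    intro i
    have hz0 : (0:ℝ) ≤ (z i : ℝ) := (hz i) ▸ dist_nonneg
    have hz0' : (0:ℤ) ≤ z i := by exact_mod_cast hz0
    rw [hDdef]
    have hcast : (((z i).toNat : ℕ) : ℝ) = (z i : ℝ) := by
      exact_mod_cast Int.toNat_of_nonneg hz0'
    rw [hcast, ← hz i, hgap i]
  have hD1 : ∀ i, 1 ≤ D i := by
    intro i
    by_contra h
    have h0 : D i = 0 := by omega
    have := hDr i
    rw [h0] at this
    push_cast at this
    linarith [hgap_pos i]
  -- points are distinct
  have hpne : ∀ i j : Fin (n ^ 2 + 1), i ≠ j → p i ≠ p j := by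
    intro i j hij h
    apply hij
    apply htmono.injective
    rw [← hpt, ← hpt, h]
  -- Claim 1: the integer difference of distances to P is < gap length
  have habs : ∀ i : Fin (n ^ 2), |w i.succ - w i.castSucc| < (D i : ℤ) := by
    intro i
    have hne : p i.castSucc ≠ p i.succ :=
      hpne _ _ (Fin.castSucc_lt_succ (i := i)).ne
    have h1 := triangle hl hlpos hPoff (hpseg i.castSucc) (hpseg i.succ) hne
    have h2 := triangle hl hlpos hPoff (hpseg i.succ) (hpseg i.castSucc) hne.symm
    rw [dist_comm (p i.succ) (p i.castSucc)] at h2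
    rw [hw, hw] at h1 h2
    have hDi : (D i : ℝ) = dist (p i.castSucc) (p i.succ) := by rw [hDr, hgap]
    have : |(w i.succ : ℝ) - (w i.castSucc : ℝ)| < (D i : ℝ) := by
      rw [abs_lt]; constructor <;> nlinarith [h1, h2]
    exact_mod_cast this
  -- Claim 2: strictly increasing gap differences among equal gaps
  have hmono_g : ∀ i j : Fin (n ^ 2), i < j → D i = D j →
      w i.succ - w i.castSucc < w j.succ - w j.castSucc := by
    intro i j hij hDij
    have hty : t i.castSucc < t i.succ := hgap_pos i
    have htx' : t i.castSucc < t j.castSucc :=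
      htmono (by exact_mod_cast Fin.castSucc_lt_castSucc_iff.mpr hij)
    have hty'g : t j.castSucc < t j.succ := hgap_pos j
    have hk : t i.succ - t i.castSucc = t j.succ - t j.castSucc := by
      have h1 := hDr i; have h2 := hDr j
      rw [hDij] at h1; linarith
    have hty'x : t i.castSucc < t j.succ := by linarith
    have hd : t j.succ - t i.castSucc ≠ 0 := sub_ne_zero.mpr (ne_of_gt hty'x)
    set α : ℝ := (t i.succ - t i.castSucc)/(t j.succ - t i.castSucc) with hα
    have hα0 : 0 < α := by apply div_pos <;> linarith
    have hα1 : α < 1 := by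
      rw [hα, div_lt_one (by linarith)]; linarith
    -- scalar combination identities
    have hsy : (1-α)*(t i.castSucc) + α*(t j.succ) = t i.succ := by
      rw [hα]; field_simp; ring
    have hsx' : α*(t i.castSucc) + (1-α)*(t j.succ) = t j.castSucc := by
      rw [hα]; field_simp; linear_combination (t i.castSucc - t j.succ) * hk
    -- point combination identities
    have hE : ∀ i' : Fin (n ^ 2 + 1), p i' = A + (t i' / l) • (B - A) := by
      intro i'
      obtain ⟨θ, _, _, hpe, hpd⟩ := param hl hlpos (hpseg i')
      have : θ = t i' / l := by
        rw [eq_div_iff hlpos.ne', ← hpd, hpt]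
      rw [hpe, this]
    have hy_comb : p i.succ = (1-α) • p i.castSucc + α • p j.succ := by
      rw [hE i.succ, hE i.castSucc, hE j.succ]
      match_scalars <;> (field_simp; linarith [hsy])
    have hx'_comb : p j.castSucc = α • p i.castSucc + (1-α) • p j.succ := by
      rw [hE j.castSucc, hE i.castSucc, hE j.succ]
      match_scalars <;> (field_simp; linarith [hsx'])
    have hxy' : p i.castSucc ≠ p j.succ := by
      intro h
      have : t i.castSucc = t j.succ := by rw [← hpt, ← hpt, h]
      linarith
    have hlt1 := strict_conv hl hlpos hPoff (hpseg i.castSucc) (hpseg j.succ) hxy'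
      (by linarith : (0:ℝ) < 1 - α) hα0 (by ring) hy_comb
    have hlt2 := strict_conv hl hlpos hPoff (hpseg i.castSucc) (hpseg j.succ) hxy'
      hα0 (by linarith : (0:ℝ) < 1 - α) (by ring) hx'_comb
    simp only [hw] at hlt1 hlt2
    have hfin : ((w i.succ - w i.castSucc : ℤ) : ℝ) < ((w j.succ - w j.castSucc : ℤ) : ℝ) := by
      push_cast
      nlinarith [hlt1, hlt2]
    exact_mod_cast hfin
  -- Claim 3: each gap length k occurs at most 2k-1 times
  have hcount : ∀ k, ((univ : Finset (Fin (n ^ 2))).filter fun i => D i = k).card ≤ 2*k - 1 := by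
    intro k
    have hmaps : ∀ i ∈ (univ : Finset (Fin (n ^ 2))).filter (fun i => D i = k),
        w i.succ - w i.castSucc ∈ Finset.Ioo (-(k:ℤ)) (k:ℤ) := by
      intro i hi
      simp only [Finset.mem_filter] at hi
      have := habs i
      rw [hi.2] at this
      rw [Finset.mem_Ioo]
      constructor <;> [linarith [neg_abs_le (w i.succ - w i.castSucc)];
        linarith [le_abs_self (w i.succ - w i.castSucc)]]
    have hinjOn : ∀ i ∈ (univ : Finset (Fin (n ^ 2))).filter (fun i => D i = k),
        ∀ j ∈ (univ : Finset (Fin (n ^ 2))).filter (fun i => D i = k),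
        w i.succ - w i.castSucc = w j.succ - w j.castSucc → i = j := by
      intro i hi j hj h
      simp only [Finset.mem_filter] at hi hj
      rcases lt_trichotomy i j with hlt | heq | hgt
      · exact absurd h (by have := hmono_g i j hlt (hi.2.trans hj.2.symm); omega)
      · exact heq
      · exact absurd h (by have := hmono_g j i hgt (hj.2.trans hi.2.symm); omega)
    calc ((univ : Finset (Fin (n ^ 2))).filter fun i => D i = k).card
        ≤ (Finset.Ioo (-(k:ℤ)) (k:ℤ)).card := Finset.card_le_card_of_injOn _ hmaps hinjOn
      _ ≤ 2*k - 1 := by rw [Int.card_Ioo]; omega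
  -- counting bound
  have hsum := counting n hn D hD1 hcount
  -- telescoping
  set f : ℕ → ℝ := fun m => t ⟨min m (n ^ 2), by omega⟩ with hf
  have htel : ∑ i ∈ Finset.range (n ^ 2), (f (i+1) - f i) = f (n ^ 2) - f 0 :=
    Finset.sum_range_sub f (n ^ 2)
  have hterm : ∀ i : Fin (n ^ 2), (D i : ℝ) = f (↑i + 1) - f ↑i := by
    intro i
    have hilt := i.isLt
    rw [hDr i, hf]
    congr 2 <;> (apply Fin.ext; simp only [Fin.val_succ, Fin.coe_castSucc]; omega)
  have hsum_eq : ∑ i : Fin (n ^ 2), (D i : ℝ) = f (n ^ 2) - f 0 := by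
    rw [← htel]
    rw [Finset.sum_congr rfl (fun i _ => hterm i)]
    exact Fin.sum_univ_eq_sum_range (fun m => f (m+1) - f m) (n ^ 2)
  -- bounds on the endpoints
  have hfN : f (n ^ 2) ≤ l := by
    rw [hf]
    simp only [min_self]
    rw [← hpt]
    obtain ⟨θ, _, hθ1, _, hpd⟩ := param hl hlpos (hpseg _)
    rw [hpd]
    nlinarith
  have hf0 : 0 ≤ f 0 := by
    rw [hf]
    simp only [Nat.zero_min]
    rw [← hpt]
    exact dist_nonneg
  linarith [hsum, hsum_eq, hfN, hf0]
end

section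
/- Let Δ be a straight line segment of length b in the plane, let M be an integral point set in the plane, and suppose Δ contains exactly t points of M. Then b ≥ (2/3)t^{3/2} − (3/2)t + (5/6)t^{1/2}. -/
set_option maxHeartbeats 2000000

open Finset
open scoped RealInnerProductSpace

private lemma IPS.sumsq (K : ℕ) : 6 * ∑ m ∈ range K, (m:ℤ)^2 = ((K:ℤ)-1)*K*(2*K-1) := by
  induction K with
  | zero => simp
  | succ K ih =>
    rw [Finset.sum_range_succ, mul_add, ih]
    push_cast
    ring

private lemma IPS.sumodd (K : ℕ) : ∑ g ∈ Finset.Icc 1 K, (2*g-1) = K^2 := by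
  induction K with
  | zero => simp
  | succ K ih =>
    rw [Finset.sum_Icc_succ_top (by omega), ih]
    have : (K+1)^2 = K^2 + (2*K+1) := by ring
    omega

private lemma IPS.card_filter_le (n K : ℕ) (G a b : ℕ → ℤ)
    (hab : ∀ i < n, a i + b i = 2 * G i)
    (ha : ∀ i < n, 1 ≤ a i) (hb : ∀ i < n, 1 ≤ b i)
    (hmono : ∀ i j, i < j → j < n → a i * b j < a j * b i) :
    ((range n).filter (fun i => G i ≤ (K:ℤ))).card ≤ K^2 := by
  classical
  have key : ((range n).filter (fun i => G i ≤ (K:ℤ))).card ≤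
      ((Finset.Icc 1 K).sigma (fun g => Finset.Icc 1 (2*g-1))).card := by
    apply Finset.card_le_card_of_injOn (fun i => ⟨(G i).toNat, (a i).toNat⟩)
    · intro i hi
      simp only [mem_coe, mem_filter, mem_range] at hi
      have h1 := hab i hi.1
      have h2 := ha i hi.1
      have h3 := hb i hi.1
      simp only [mem_coe, Finset.mem_sigma, Finset.mem_Icc]
      omega
    · intro i hi j hj hij
      simp only [mem_coe, mem_filter, mem_range] at hi hj
      have h1i := hab i hi.1; have h1j := hab j hj.1
      have h2i := ha i hi.1; have h2j := ha j hj.1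
      have h3i := hb i hi.1; have h3j := hb j hj.1
      simp only [Sigma.mk.inj_iff, heq_eq_eq] at hij
      have hG : G i = G j := by omega
      have hA : a i = a j := by omega
      have hB : b i = b j := by omega
      by_contra hne
      rcases Nat.lt_or_ge i j with h | h
      · have := hmono i j h hj.1
        rw [hA, hB] at this
        exact lt_irrefl _ this
      · have hji : j < i := by omega
        have := hmono j i hji hi.1
        rw [hA, hB] at this
        exact lt_irrefl _ this
  rw [Finset.card_sigma] at key
  calc ((range n).filter (fun i => G i ≤ (K:ℤ))).card
      ≤ ∑ g ∈ Finset.Icc 1 K, (Finset.Icc 1 (2*g-1)).card := key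
    _ = ∑ g ∈ Finset.Icc 1 K, (2*g-1) := by
        apply Finset.sum_congr rfl
        intro g hg
        rw [Nat.card_Icc]
        simp only [Finset.mem_Icc] at hg
        omega
    _ = K^2 := IPS.sumodd K

private lemma IPS.sumG_ge (n K : ℕ) (G : ℕ → ℤ) (hG1 : ∀ i < n, 1 ≤ G i)
    (hcard : ∀ K' : ℕ, ((range n).filter (fun i => G i ≤ (K':ℤ))).card ≤ K'^2) :
    ∑ m ∈ range K, ((n:ℤ) - (m:ℤ)^2) ≤ ∑ i ∈ range n, G i := by
  have main : ∀ L : ℕ, ∑ m ∈ range L, ((n:ℤ) - (m:ℤ)^2) ≤ ∑ i ∈ range n, min (G i) L := by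
    intro L
    induction L with
    | zero => simpa using Finset.sum_nonneg fun i hi => le_min (by linarith [hG1 i (mem_range.1 hi)]) le_rfl
    | succ L ih =>
      rw [Finset.sum_range_succ]
      have step : ∑ i ∈ range n, min (G i) (L:ℤ) + ((n:ℤ) - (L:ℤ)^2)
          ≤ ∑ i ∈ range n, min (G i) ((L:ℤ)+1) := by
        have hsplit : ∀ i ∈ range n, min (G i) ((L:ℤ)+1)
            = min (G i) (L:ℤ) + (if (L:ℤ)+1 ≤ G i then (1:ℤ) else 0) := by
          intro i hi
          split_ifs with h <;> omega
        rw [Finset.sum_congr rfl hsplit, Finset.sum_add_distrib, Finset.sum_boole]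
        have hcount : (n:ℤ) - (L:ℤ)^2 ≤ ((range n).filter (fun i => (L:ℤ)+1 ≤ G i)).card := by
          have h1 : ((range n).filter (fun i => ¬ ((L:ℤ)+1 ≤ G i))).card ≤ L^2 := by
            have : ((range n).filter (fun i => ¬ ((L:ℤ)+1 ≤ G i)))
                = ((range n).filter (fun i => G i ≤ (L:ℤ))) := by
              apply Finset.filter_congr; intro i _; simp
            rw [this]; exact hcard L
          have h2 := Finset.card_filter_add_card_filter_not
            (s := range n) (p := fun i => (L:ℤ)+1 ≤ G i)
          rw [Finset.card_range] at h2
          have hn : n ≤ ((range n).filter (fun i => (L:ℤ)+1 ≤ G i)).card + L^2 := by omega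
          have h4 := (Nat.cast_le (α := ℤ)).2 hn
          push_cast at h4
          linarith
        linarith [hcount]
      calc ∑ m ∈ range L, ((n:ℤ) - (m:ℤ)^2) + ((n:ℤ) - (L:ℤ)^2)
          ≤ ∑ i ∈ range n, min (G i) (L:ℤ) + ((n:ℤ) - (L:ℤ)^2) := by linarith [ih]
        _ ≤ ∑ i ∈ range n, min (G i) ((L:ℤ)+1) := step
        _ = ∑ i ∈ range n, min (G i) ((L+1 : ℕ):ℤ) := by push_cast; ring_nf
  calc ∑ m ∈ range K, ((n:ℤ) - (m:ℤ)^2) ≤ ∑ i ∈ range n, min (G i) K := main K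
    _ ≤ ∑ i ∈ range n, G i := Finset.sum_le_sum (fun i _ => min_le_left _ _)

private lemma IPS.keyineq (τ K : ℝ) (hτ1 : 1 ≤ τ) (hτ2 : 2 ≤ τ^2) (h1 : τ ≤ K) (h2 : K ≤ τ + 1) :
    (2/3)*τ^3 - (3/2)*τ^2 + (5/6)*τ ≤ K*(τ^2-1) - (K-1)*K*(2*K-1)/6 := by
  have hE : 6*(K*(τ^2-1) - (K-1)*K*(2*K-1)/6) - 6*((2/3)*τ^3 - (3/2)*τ^2 + (5/6)*τ)
      = (τ+1-K)*(12*τ^2-12*τ) + (K-τ)*(6*(τ^2-2)+6*(τ-1)^2)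
        + 2*(K-τ)*(τ+1-K)*(K+2*τ-1/2) := by ring
  nlinarith [mul_nonneg (sub_nonneg.2 h2) (by nlinarith : (0:ℝ) ≤ 12*τ^2-12*τ),
    mul_nonneg (sub_nonneg.2 h1) (by nlinarith [sq_nonneg (τ-1)] : (0:ℝ) ≤ 6*(τ^2-2)+6*(τ-1)^2),
    mul_nonneg (mul_nonneg (sub_nonneg.2 h1) (sub_nonneg.2 h2)) (by nlinarith : (0:ℝ) ≤ K+2*τ-1/2)]

private lemma IPS.lemB (n : ℕ) (x d : ℕ → ℝ) (f c : ℝ) (hc : 0 < c)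
    (hd : ∀ i ≤ n, 0 < d i)
    (hsq : ∀ i ≤ n, d i ^ 2 = c + (x i - f) ^ 2)
    (G : ℕ → ℤ) (hG1 : ∀ i < n, 1 ≤ G i)
    (hxG : ∀ i < n, x (i+1) - x i = (G i : ℝ))
    (D : ℕ → ℤ) (hD : ∀ i < n, d (i+1) - d i = (D i : ℝ)) :
    ∃ a b : ℕ → ℤ, (∀ i < n, a i + b i = 2 * G i) ∧ (∀ i < n, 1 ≤ a i) ∧
      (∀ i < n, 1 ≤ b i) ∧ (∀ i j, i < j → j < n → a i * b j < a j * b i) := by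
  set w : ℕ → ℝ := fun i => d i + (x i - f) with hw
  set z : ℕ → ℝ := fun i => d i - (x i - f) with hz
  have hwz : ∀ i ≤ n, w i * z i = c := by
    intro i hi
    have := hsq i hi
    simp only [hw, hz]
    nlinarith [this]
  have hwpos : ∀ i ≤ n, 0 < w i ∧ 0 < z i := by
    intro i hi
    have h1 := hwz i hi
    have h2 : 0 < w i + z i := by
      have := hd i hi; simp only [hw, hz]; linarith
    constructor
    · by_contra h
      push_neg at h
      have hzneg : z i ≤ 0 := by nlinarith
      linarith
    · by_contra h
      push_neg at h
      have hwneg : w i ≤ 0 := by nlinarith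
      linarith
  have haR : ∀ i < n, ((G i + D i : ℤ) : ℝ) = w (i+1) - w i := by
    intro i hi
    have h1 := hxG i hi; have h2 := hD i hi
    simp only [hw]; push_cast; linarith
  have hbR : ∀ i < n, ((G i - D i : ℤ) : ℝ) = z i - z (i+1) := by
    intro i hi
    have h1 := hxG i hi; have h2 := hD i hi
    simp only [hz]; push_cast; linarith
  have hstep : ∀ i < n, w i < w (i+1) := by
    intro i hi
    by_contra hcon
    push_neg at hcon
    have hi1 : i ≤ n := le_of_lt hi
    have hi2 : i + 1 ≤ n := hi
    obtain ⟨hwi, hzi⟩ := hwpos i hi1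
    obtain ⟨hwi1, hzi1⟩ := hwpos (i+1) hi2
    have e1 := hwz i hi1
    have e2 := hwz (i+1) hi2
    have hzle : z i ≤ z (i+1) := by nlinarith
    have hGi := hG1 i hi
    have h1 := haR i hi; have h2 := hbR i hi
    have h3 : ((G i + D i : ℤ) : ℝ) + ((G i - D i : ℤ) : ℝ) ≤ 0 := by linarith
    have h2G : ((G i + D i : ℤ) : ℝ) + ((G i - D i : ℤ) : ℝ) = 2 * (G i : ℝ) := by
      push_cast; ring
    rw [h2G] at h3
    have h4 : (1 : ℝ) ≤ (G i : ℝ) := by exact_mod_cast hGi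
    linarith
  have hapos : ∀ i < n, 1 ≤ G i + D i := by
    intro i hi
    have h1 := haR i hi
    have h2 := hstep i hi
    have h3 : (0:ℝ) < ((G i + D i : ℤ) : ℝ) := by linarith
    have h4 : (0:ℤ) < G i + D i := by exact_mod_cast h3
    omega
  have hbpos : ∀ i < n, 1 ≤ G i - D i := by
    intro i hi
    have hi1 : i ≤ n := le_of_lt hi
    have hi2 : i + 1 ≤ n := hi
    obtain ⟨hwi, hzi⟩ := hwpos i hi1
    obtain ⟨hwi1, hzi1⟩ := hwpos (i+1) hi2
    have e1 := hwz i hi1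
    have e2 := hwz (i+1) hi2
    have h1 := hbR i hi
    have hzgt : z (i+1) < z i := by nlinarith [hstep i hi]
    have h3 : (0:ℝ) < ((G i - D i : ℤ) : ℝ) := by linarith
    have h4 : (0:ℤ) < G i - D i := by exact_mod_cast h3
    omega
  have wlt : ∀ j, j ≤ n → ∀ i, i < j → w i < w j := by
    intro j
    induction j with
    | zero => intro _ i hi; omega
    | succ j ih =>
      intro hj i hi
      rcases Nat.lt_or_ge i j with h | h
      · exact lt_trans (ih (by omega) i h) (hstep j (by omega))
      · have hij : i = j := by omega
        subst hij
        exact hstep i (by omega)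
  refine ⟨fun i => G i + D i, fun i => G i - D i, fun i _ => by ring, hapos, hbpos, ?_⟩
  intro i j hij hjn
  have hin : i < n := by omega
  have hi1 : i ≤ n := by omega
  have hi2 : i + 1 ≤ n := by omega
  have hj1 : j ≤ n := by omega
  have hj2 : j + 1 ≤ n := by omega
  obtain ⟨hwi, hzi⟩ := hwpos i hi1
  obtain ⟨hwi1, hzi1⟩ := hwpos (i+1) hi2
  obtain ⟨hwj, hzj⟩ := hwpos j hj1
  obtain ⟨hwj1, hzj1⟩ := hwpos (j+1) hj2
  have ei := hwz i hi1
  have ei1 := hwz (i+1) hi2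
  have ej := hwz j hj1
  have ej1 := hwz (j+1) hj2
  set Ai : ℝ := ((G i + D i : ℤ) : ℝ) with hAi
  set Bi : ℝ := ((G i - D i : ℤ) : ℝ) with hBi
  set Aj : ℝ := ((G j + D j : ℤ) : ℝ) with hAj
  set Bj : ℝ := ((G j - D j : ℤ) : ℝ) with hBj
  have idi : Bi * (w i * w (i+1)) = c * Ai := by
    rw [hBi, hAi, hbR i hin, haR i hin]; nlinarith [ei, ei1]
  have idj : Bj * (w j * w (j+1)) = c * Aj := by
    rw [hBj, hAj, hbR j hjn, haR j hjn]; nlinarith [ej, ej1]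
  have hPij : w i * w (i+1) < w j * w (j+1) := by
    have h1 : w i < w j := wlt j hj1 i hij
    have h2 : w (i+1) ≤ w j := by
      rcases Nat.lt_or_ge (i+1) j with h | h
      · exact le_of_lt (wlt j hj1 (i+1) h)
      · have hh : i + 1 = j := by omega
        rw [hh]
    have h3 : w j < w (j+1) := hstep j hjn
    nlinarith
  have haiR : (0:ℝ) < Ai := by rw [hAi]; exact_mod_cast hapos i hin
  have hajR : (0:ℝ) < Aj := by rw [hAj]; exact_mod_cast hapos j hjn
  have hPi : 0 < w i * w (i+1) := by positivity
  have hPj : 0 < w j * w (j+1) := by positivity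
  have h5 : (Ai * Bj) * ((w i * w (i+1)) * (w j * w (j+1)))
      < (Aj * Bi) * ((w i * w (i+1)) * (w j * w (j+1))) := by
    have e5 : (Ai * Bj) * ((w i * w (i+1)) * (w j * w (j+1)))
        = (c * Ai * Aj) * (w i * w (i+1)) := by
      linear_combination Ai * (w i * w (i+1)) * idj
    have e6 : (Aj * Bi) * ((w i * w (i+1)) * (w j * w (j+1)))
        = (c * Ai * Aj) * (w j * w (j+1)) := by
      linear_combination Aj * (w j * w (j+1)) * idi
    rw [e5, e6]
    have hpos : 0 < c * Ai * Aj := by positivity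
    exact (mul_lt_mul_iff_right₀ hpos).2 hPij
  have h6 : Ai * Bj < Aj * Bi := by
    by_contra hcon
    push_neg at hcon
    have h8 := mul_le_mul_of_nonneg_right hcon
      (le_of_lt (show (0:ℝ) < (w i * w (i+1)) * (w j * w (j+1)) by positivity))
    linarith
  have h7 : ((G i + D i) * (G j - D j) : ℤ) < ((G j + D j) * (G i - D i) : ℤ) := by
    have h9 : ((((G i + D i) * (G j - D j)) : ℤ) : ℝ) < ((((G j + D j) * (G i - D i)) : ℤ) : ℝ) := by
      push_cast
      push_cast [hAi, hBi, hAj, hBj] at h6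
      linarith
    exact_mod_cast h9
  exact h7

/-- If a straight line segment of length b contains exactly t points of an
integral point set M in the plane, then b ≥ (2/3)t^{3/2} − (3/2)t + (5/6)t^{1/2}. -/
theorem segment_length_t_points (M : Finset (EuclideanSpace ℝ (Fin 2)))
    (hM : IsIntegralPointSet M) (A B : EuclideanSpace ℝ (Fin 2)) (b : ℝ)
    (hb : dist A B = b) (t : ℕ) (ht : 1 ≤ t)
    (hcard : (segment ℝ A B ∩ (M : Set (EuclideanSpace ℝ (Fin 2)))).ncard = t) :
    (2 / 3 : ℝ) * (t : ℝ) ^ ((3 : ℝ) / 2) - (3 / 2 : ℝ) * (t : ℝ) +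
      (5 / 6 : ℝ) * (t : ℝ) ^ ((1 : ℝ) / 2) ≤ b := by
  classical
  rcases eq_or_lt_of_le ht with h1 | ht2
  · -- t = 1
    have hb0 : 0 ≤ b := hb ▸ dist_nonneg
    rw [← h1]
    norm_num [Real.one_rpow]
    linarith
  -- now 2 ≤ t
  have ht2' : 2 ≤ t := ht2
  have hAB : A ≠ B := by
    intro h
    rw [← h, segment_same] at hcard
    have hsub : ({A} : Set (EuclideanSpace ℝ (Fin 2))) ∩ ↑M ⊆ {A} := Set.inter_subset_left
    have hle := Set.ncard_le_ncard hsub (Set.finite_singleton A)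
    rw [hcard, Set.ncard_singleton] at hle
    omega
  have hBA : B - A ≠ 0 := sub_ne_zero.2 (Ne.symm hAB)
  have hb0 : 0 < b := hb ▸ dist_pos.2 hAB
  have hnorm : ‖B - A‖ = b := by rw [← hb, dist_eq_norm, norm_sub_rev]
  set e : EuclideanSpace ℝ (Fin 2) := (‖B - A‖)⁻¹ • (B - A) with he_def
  have he : ‖e‖ = 1 := norm_smul_inv_norm hBA
  have hee : ⟪e, e⟫ = 1 := by
    rw [real_inner_self_eq_norm_sq, he]; norm_num
  have hrep : ∀ q ∈ segment ℝ A B, q = A + (dist A q) • e ∧ dist A q ≤ b := by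
    intro q hq
    rw [segment_eq_image'] at hq
    obtain ⟨θ, ⟨h0, h1⟩, rfl⟩ := hq
    have hd : dist A (A + θ • (B - A)) = θ * b := by
      rw [dist_eq_norm]
      have h2 : A - (A + θ • (B - A)) = -(θ • (B - A)) := by abel
      rw [h2, norm_neg, norm_smul, Real.norm_eq_abs, abs_of_nonneg h0, hnorm]
    constructor
    · rw [hd, he_def, smul_smul, hnorm]
      congr 1
      rw [mul_assoc, mul_inv_cancel₀ (ne_of_gt hb0), mul_one]
    · rw [hd]
      nlinarith
  have hdists : ∀ s u : ℝ, dist (A + s • e) (A + u • e) = |s - u| := by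
    intro s u
    rw [dist_eq_norm]
    have h2 : (A + s • e) - (A + u • e) = (s - u) • e := by module
    rw [h2, norm_smul, he, mul_one, Real.norm_eq_abs]
  have hfin : (segment ℝ A B ∩ (M : Set (EuclideanSpace ℝ (Fin 2)))).Finite :=
    M.finite_toSet.inter_of_right _
  set T : Finset (EuclideanSpace ℝ (Fin 2)) := hfin.toFinset with hT_def
  have hTmem : ∀ q, q ∈ T ↔ q ∈ segment ℝ A B ∧ q ∈ M := by
    intro q
    rw [hT_def, Set.Finite.mem_toFinset]
    simp [Set.mem_inter_iff]
  have hTcard : T.card = t := by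
    rw [hT_def, ← Set.ncard_eq_toFinset_card _ hfin, hcard]
  set X : Finset ℝ := T.image (fun q => dist A q) with hX_def
  have hXcard : X.card = t := by
    rw [hX_def, Finset.card_image_of_injOn, hTcard]
    intro q hq q' hq' hqq
    have h1 := (hrep q ((hTmem q).1 (by simpa using hq)).1).1
    have h2 := (hrep q' ((hTmem q').1 (by simpa using hq')).1).1
    dsimp only at hqq
    rw [h1, h2, hqq]
  set xf : ℕ → ℝ := fun i => if h : i < t then (X.orderEmbOfFin hXcard) ⟨i, h⟩ else 0 with hxf_def
  have hxmono : ∀ i j, i < j → j < t → xf i < xf j := by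
    intro i j hij hjt
    have hit : i < t := by omega
    simp only [hxf_def, dif_pos hit, dif_pos hjt]
    exact (X.orderEmbOfFin hXcard).strictMono (by exact hij)
  have hxmem : ∀ i, i < t → xf i ∈ X := by
    intro i hit
    simp only [hxf_def, dif_pos hit]
    exact Finset.orderEmbOfFin_mem X hXcard _
  set Q : ℕ → EuclideanSpace ℝ (Fin 2) := fun i => A + (xf i) • e with hQ_def
  have hQT : ∀ i, i < t → Q i ∈ T ∧ dist A (Q i) = xf i := by
    intro i hit
    have hx := hxmem i hit
    rw [hX_def, Finset.mem_image] at hx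
    obtain ⟨q, hqT, hqd⟩ := hx
    have hq1 := (hrep q ((hTmem q).1 hqT).1).1
    have heq : Q i = q := by
      have hQi : Q i = A + xf i • e := rfl
      rw [hQi, ← hqd]
      exact hq1.symm
    rw [heq]
    exact ⟨hqT, hqd⟩
  have hQM : ∀ i, i < t → Q i ∈ M := fun i hi => ((hTmem _).1 (hQT i hi).1).2
  -- get off-line point P
  obtain ⟨P, hPM, hPline⟩ : ∃ P ∈ M, ¬∃ r : ℝ, P = A + r • (B - A) := by
    by_contra h
    push_neg at h
    apply hM.1
    rw [collinear_iff_exists_forall_eq_smul_vadd]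
    refine ⟨A, B - A, fun p hp => ?_⟩
    obtain ⟨r, hr⟩ := h p hp
    exact ⟨r, by rw [hr, vadd_eq_add, add_comm]⟩
  have hPnotQ : ∀ s : ℝ, P ≠ A + s • e := by
    intro s h
    apply hPline
    refine ⟨s * (‖B - A‖)⁻¹, ?_⟩
    rw [h, he_def, smul_smul]
  set f : ℝ := ⟪P - A, e⟫ with hf_def
  set u0 : EuclideanSpace ℝ (Fin 2) := (P - A) - f • e with hu0_def
  have horth : ⟪u0, e⟫ = 0 := by
    rw [hu0_def, inner_sub_left, real_inner_smul_left, hee, hf_def]; ring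
  have hu0ne : u0 ≠ 0 := by
    intro h
    rw [hu0_def, sub_eq_zero] at h
    apply hPnotQ f
    rw [← h]; abel
  set c : ℝ := ‖u0‖^2 with hc_def
  have hc : 0 < c := pow_pos (norm_pos_iff.2 hu0ne) 2
  have hsqgen : ∀ s : ℝ, dist P (A + s • e) ^ 2 = c + (s - f)^2 := by
    intro s
    have hPq : P - (A + s • e) = u0 + (f - s) • e := by
      rw [hu0_def]; module
    rw [dist_eq_norm, hPq, norm_add_sq_real, real_inner_smul_right, horth,
      norm_smul, he, mul_one, Real.norm_eq_abs, sq_abs]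
    ring
  -- indices
  set n : ℕ := t - 1 with hn_def
  have hnt : n + 1 = t := by omega
  have hn1 : 1 ≤ n := by omega
  -- gaps
  have hGex : ∀ i, ∃ z : ℤ, (i < n → (xf (i+1) - xf i = (z:ℝ) ∧ 1 ≤ z)) := by
    intro i
    by_cases hi : i < n
    · obtain ⟨z, hz⟩ := hM.2 (Q i) (hQM i (by omega)) (Q (i+1)) (hQM (i+1) (by omega))
      refine ⟨z, fun _ => ?_⟩
      have hmono' := hxmono i (i+1) (by omega) (by omega)
      have hdQ : dist (Q i) (Q (i+1)) = xf (i+1) - xf i := by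
        have h2 := hdists (xf i) (xf (i+1))
        have hQi : Q i = A + xf i • e := rfl
        have hQi1 : Q (i+1) = A + xf (i+1) • e := rfl
        rw [hQi, hQi1, h2, abs_sub_comm, abs_of_pos (by linarith)]
      constructor
      · rw [← hdQ, hz]
      · have hz1 : (0:ℝ) < (z:ℤ) := by
          rw [← hz] at *
          have := dist_pos.2 (show Q i ≠ Q (i+1) by
            intro hqq
            rw [hqq] at hdQ
            simp at hdQ
            linarith)
          rw [hz] at this
          exact_mod_cast this
        have : (0:ℤ) < z := by exact_mod_cast hz1
        omega
    · exact ⟨0, fun h => absurd h hi⟩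
  choose G hG using hGex
  -- distances to P
  have hdex : ∀ i, ∃ z : ℤ, (i < t → dist P (Q i) = (z:ℝ)) := by
    intro i
    by_cases hi : i < t
    · obtain ⟨z, hz⟩ := hM.2 P hPM (Q i) (hQM i hi)
      exact ⟨z, fun _ => hz⟩
    · exact ⟨0, fun h => absurd h hi⟩
  choose dz hdz using hdex
  set d : ℕ → ℝ := fun i => dist P (Q i) with hd_def
  have hdpos : ∀ i ≤ n, 0 < d i := by
    intro i hi
    exact dist_pos.2 (hPnotQ (xf i))
  have hsq' : ∀ i ≤ n, d i ^ 2 = c + (xf i - f)^2 := by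
    intro i hi
    exact hsqgen (xf i)
  set D : ℕ → ℤ := fun i => dz (i+1) - dz i with hD_def
  have hD : ∀ i < n, d (i+1) - d i = ((D i : ℤ) : ℝ) := by
    intro i hi
    have h1 := hdz i (by omega)
    have h2 := hdz (i+1) (by omega)
    simp only [hd_def, hD_def, h1, h2]
    push_cast
    ring
  have hG1 : ∀ i < n, 1 ≤ G i := fun i hi => ((hG i) hi).2
  have hxG : ∀ i < n, xf (i+1) - xf i = ((G i : ℤ) : ℝ) := fun i hi => ((hG i) hi).1
  -- apply the chain lemma
  obtain ⟨a, b', hab, ha, hb', hmono⟩ :=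
    IPS.lemB n xf d f c hc hdpos hsq' G hG1 hxG D hD
  have hcard' : ∀ K' : ℕ, ((range n).filter (fun i => G i ≤ (K':ℤ))).card ≤ K'^2 :=
    fun K' => IPS.card_filter_le n K' G a b' hab ha hb' hmono
  -- choose K
  set τ : ℝ := Real.sqrt t with hτ_def
  have ht0 : (0:ℝ) ≤ (t:ℝ) := by positivity
  have hτsq : τ^2 = (t:ℝ) := Real.sq_sqrt ht0
  have hτ0 : 0 ≤ τ := Real.sqrt_nonneg _
  have hτ2 : 2 ≤ τ^2 := by
    rw [hτsq]; exact_mod_cast ht2'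
  have hτ1 : 1 ≤ τ := by nlinarith
  set K : ℕ := ⌈τ⌉₊ with hK_def
  have hKτ : τ ≤ (K:ℝ) := Nat.le_ceil τ
  have hKτ1 : (K:ℝ) ≤ τ + 1 := le_of_lt (Nat.ceil_lt_add_one hτ0)
  -- sum bound
  have hsum := IPS.sumG_ge n K G hG1 hcard'
  -- telescoping
  have htel : xf n - xf 0 = ∑ i ∈ range n, (xf (i+1) - xf i) := (Finset.sum_range_sub xf n).symm
  have hsumG : ∑ i ∈ range n, (xf (i+1) - xf i) = ((∑ i ∈ range n, G i : ℤ) : ℝ) := by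
    push_cast
    exact Finset.sum_congr rfl (fun i hi => hxG i (mem_range.1 hi))
  -- cast sum lower bound to ℝ
  have hsumR : ((∑ m ∈ range K, ((n:ℤ) - (m:ℤ)^2) : ℤ) : ℝ) ≤ ((∑ i ∈ range n, G i : ℤ) : ℝ) := by
    exact_mod_cast hsum
  have hS1 : ((∑ m ∈ range K, ((n:ℤ) - (m:ℤ)^2) : ℤ) : ℝ)
      = (K:ℝ) * n - ((∑ m ∈ range K, (m:ℤ)^2 : ℤ) : ℝ) := by
    push_cast
    rw [Finset.sum_sub_distrib]
    simp [Finset.sum_const, Finset.card_range]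
  have hS2 : (6:ℝ) * ((∑ m ∈ range K, (m:ℤ)^2 : ℤ) : ℝ) = ((K:ℝ)-1)*K*(2*K-1) := by
    have := IPS.sumsq K
    have h9 : ((6 * ∑ m ∈ range K, (m:ℤ)^2 : ℤ) : ℝ) = ((((K:ℤ)-1)*K*(2*K-1) : ℤ) : ℝ) := by
      exact_mod_cast congrArg (fun u : ℤ => (u : ℝ)) this
    push_cast at h9
    push_cast
    linarith
  -- b bound on span
  have hxfn_le : xf n ≤ b := by
    have h1 := (hrep (Q n) ((hTmem _).1 (hQT n (by omega)).1).1).2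
    rw [(hQT n (by omega)).2] at h1
    exact h1
  have hxf0 : 0 ≤ xf 0 := by
    have h1 := (hQT 0 (by omega)).2
    rw [← h1]
    exact dist_nonneg
  have hspan : ((∑ i ∈ range n, G i : ℤ) : ℝ) ≤ b := by
    rw [← hsumG, ← htel]
    linarith
  -- final arithmetic
  have hkey := IPS.keyineq τ K hτ1 hτ2 hKτ hKτ1
  have hnR : ((n:ℕ) : ℝ) = (t:ℝ) - 1 := by
    rw [hn_def, Nat.cast_sub ht]
    norm_num
  have h32 : (t:ℝ) ^ ((3:ℝ)/2) = τ^3 := by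
    have h30 : ((3:ℝ)/2) = (1/2) * 3 := by norm_num
    rw [h30, Real.rpow_mul ht0]
    rw [show ((3:ℝ)) = ((3:ℕ):ℝ) by norm_num, Real.rpow_natCast]
    rw [← Real.sqrt_eq_rpow]
  have h12 : (t:ℝ) ^ ((1:ℝ)/2) = τ := by
    rw [← Real.sqrt_eq_rpow]
  rw [h32, h12]
  -- combine everything
  have hchain : (K:ℝ) * ((t:ℝ) - 1) - ((K:ℝ)-1)*K*(2*K-1)/6 ≤ b := by
    have e1 : (K:ℝ) * ((t:ℝ) - 1) - ((K:ℝ)-1)*K*(2*K-1)/6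
        = (K:ℝ) * n - ((∑ m ∈ range K, (m:ℤ)^2 : ℤ) : ℝ) := by
      rw [hnR]
      linarith [hS2]
    rw [e1, ← hS1]
    linarith [hsumR, hspan]
  have : K*(τ^2-1) - ((K:ℝ)-1)*K*(2*K-1)/6 ≤ b := by
    rw [hτsq]
    exact hchain
  linarith [hkey]
end

section
/- Let M = {M₁, M₂, M₃, M₄} be an integral point set of four points in the plane with |M₁M₂| = 1, and let l be the line through M₁ and M₂. Then M₃ ∈ l or M₄ ∈ l. -/
open scoped RealInnerProductSpace


lemma bounds_aux {A st : ℝ} (hA : 1 ≤ A) (hst0 : 0 ≤ st) (h : st^2 = A^2 - 1/4) :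
    A - 1/2 < st ∧ st < A := by
  constructor <;> nlinarith [sq_nonneg (st - A), sq_nonneg (st + A)]

lemma no_int_between (k n : ℤ) (h1 : (n:ℝ) < |(k:ℝ)|) (h2 : |(k:ℝ)| < n + 1) : False := by
  have e : |(k:ℝ)| = ((|k| : ℤ) : ℝ) := by push_cast; rfl
  rw [e] at h1 h2
  have h1' : n < |k| := by exact_mod_cast h1
  have h2' : |k| < n + 1 := by exact_mod_cast h2
  omega

lemma same_sign_bounds {A B st su : ℝ} (hA : 1 ≤ A) (hB : 1 ≤ B) (hAB : B < A)
    (hst : st^2 = A^2 - 1/4) (hsu : su^2 = B^2 - 1/4) (hst0 : 0 ≤ st) (hsu0 : 0 ≤ su) :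
    A - B < st - su ∧ st - su < A - B + 1 := by
  obtain ⟨hst1, hst2⟩ := bounds_aux hA hst0 hst
  obtain ⟨hsu1, hsu2⟩ := bounds_aux hB hsu0 hsu
  have hgt : su < st := by nlinarith
  have hprod : (st - su) * (st + su) = A^2 - B^2 := by ring_nf; nlinarith
  constructor
  · nlinarith [mul_pos (sub_pos.mpr hgt) (by linarith : (0:ℝ) < st + su)]
  · nlinarith [mul_pos (sub_pos.mpr hgt) (by linarith : (0:ℝ) < st + su)]

set_option maxHeartbeats 1000000 in
lemma core_lemma (a b k : ℤ) (t u : ℝ) (h1 : t^2 = (a:ℝ)^2 - 1/4)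
    (h2 : u^2 = (b:ℝ)^2 - 1/4) (h3 : (t-u)^2 = (k:ℝ)^2) (htu : t ≠ u) : False := by
  have ha0 : a ≠ 0 := by rintro rfl; push_cast at h1; nlinarith [sq_nonneg t]
  have hb0 : b ≠ 0 := by rintro rfl; push_cast at h2; nlinarith [sq_nonneg u]
  have hk0 : k ≠ 0 := by
    rintro rfl; push_cast at h3
    exact htu (sub_eq_zero.mp (by nlinarith [sq_nonneg (t-u)]))
  have hA : 1 ≤ |(a:ℝ)| := by
    have h' : (1:ℤ) ≤ |a| := Int.one_le_abs ha0
    have := (Int.cast_le (R := ℝ)).mpr h'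
    push_cast at this; linarith
  have hB : 1 ≤ |(b:ℝ)| := by
    have h' : (1:ℤ) ≤ |b| := Int.one_le_abs hb0
    have := (Int.cast_le (R := ℝ)).mpr h'
    push_cast at this; linarith
  have hst : |t|^2 = |(a:ℝ)|^2 - 1/4 := by rw [sq_abs, sq_abs]; exact h1
  have hsu : |u|^2 = |(b:ℝ)|^2 - 1/4 := by rw [sq_abs, sq_abs]; exact h2
  have hK : |t - u| = |(k:ℝ)| := (sq_eq_sq_iff_abs_eq_abs _ _).mp h3
  obtain ⟨hst1, hst2⟩ := bounds_aux hA (abs_nonneg t) hst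
  obtain ⟨hsu1, hsu2⟩ := bounds_aux hB (abs_nonneg u) hsu
  have htne : t ≠ 0 := by rintro rfl; rw [abs_zero] at hst; nlinarith
  have hune : u ≠ 0 := by rintro rfl; rw [abs_zero] at hsu; nlinarith
  rcases le_or_gt (t*u) 0 with hsign | hsign
  · -- opposite signs: |t - u| = |t| + |u|
    have habs : |t - u| = |t| + |u| := by
      rcases htne.lt_or_gt with ht | ht <;> rcases hune.lt_or_gt with hu | hu
      · nlinarith [mul_pos_of_neg_of_neg ht hu]
      · rw [abs_of_neg ht, abs_of_pos hu, abs_of_neg (by linarith : t - u < 0)]; ring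
      · rw [abs_of_pos ht, abs_of_neg hu, abs_of_pos (by linarith : 0 < t - u)]; ring
      · nlinarith [mul_pos ht hu]
    refine no_int_between k (|a| + |b| - 1) ?_ ?_
    · rw [← hK, habs]; push_cast; linarith
    · rw [← hK, habs]; push_cast; linarith
  · -- same sign: |t - u| = ||t| - |u||
    have habs : |t - u| = |(|t| - |u|)| := by
      rcases htne.lt_or_gt with ht | ht <;> rcases hune.lt_or_gt with hu | hu
      · rw [abs_of_neg ht, abs_of_neg hu, abs_sub_comm t u]; congr 1; ring
      · nlinarith [mul_neg_of_neg_of_pos ht hu]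
      · nlinarith [mul_neg_of_pos_of_neg ht hu]
      · rw [abs_of_pos ht, abs_of_pos hu]
    rcases lt_trichotomy (|(b:ℝ)|) (|(a:ℝ)|) with hAB | hAB | hAB
    · obtain ⟨hl, hr⟩ := same_sign_bounds hA hB hAB hst hsu (abs_nonneg t) (abs_nonneg u)
      refine no_int_between k (|a| - |b|) ?_ ?_
      · rw [← hK, habs, abs_of_pos (by linarith : (0:ℝ) < |t| - |u|)]; push_cast; linarith
      · rw [← hK, habs, abs_of_pos (by linarith : (0:ℝ) < |t| - |u|)]; push_cast; linarith
    · have : |t| = |u| := by nlinarith [abs_nonneg t, abs_nonneg u]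
      rcases abs_eq_abs.mp this with h | h
      · exact htu h
      · rw [h] at hsign; nlinarith [sq_nonneg u]
    · obtain ⟨hl, hr⟩ := same_sign_bounds hB hA hAB hsu hst (abs_nonneg u) (abs_nonneg t)
      refine no_int_between k (|b| - |a|) ?_ ?_
      · rw [← hK, habs, abs_sub_comm, abs_of_pos (by linarith : (0:ℝ) < |u| - |t|)]
        push_cast; linarith
      · rw [← hK, habs, abs_sub_comm, abs_of_pos (by linarith : (0:ℝ) < |u| - |t|)]
        push_cast; linarith



lemma aux_parallel (v p q : EuclideanSpace ℝ (Fin 2)) (hv : v ≠ 0)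
    (hp : ⟪p, v⟫ = 0) (hq : ⟪q, v⟫ = 0) (hp0 : p ≠ 0) : ∃ c : ℝ, q = c • p := by
  have hip : p 0 * v 0 + p 1 * v 1 = 0 := by
    have := hp; simp [PiLp.inner_apply, RCLike.inner_apply, Fin.sum_univ_two] at this; linarith
  have hiq : q 0 * v 0 + q 1 * v 1 = 0 := by
    have := hq; simp [PiLp.inner_apply, RCLike.inner_apply, Fin.sum_univ_two] at this; linarith
  have hcross : p 0 * q 1 - p 1 * q 0 = 0 := by
    have hv01 : v 0 ≠ 0 ∨ v 1 ≠ 0 := by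
      by_contra h
      push_neg at h
      apply hv
      ext i
      fin_cases i
      · exact h.1
      · exact h.2
    rcases hv01 with h | h
    · have e : (p 0 * q 1 - p 1 * q 0) * v 0
          = q 1 * (p 0 * v 0 + p 1 * v 1) - p 1 * (q 0 * v 0 + q 1 * v 1) := by ring
      rw [hip, hiq] at e
      simp at e
      rcases e with e | e
      · exact e
      · exact absurd e h
    · have e : (p 0 * q 1 - p 1 * q 0) * v 1
          = p 0 * (q 0 * v 0 + q 1 * v 1) - q 0 * (p 0 * v 0 + p 1 * v 1) := by ring
      rw [hip, hiq] at e
      simp at e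
      rcases e with e | e
      · exact e
      · exact absurd e h
  have hp01 : p 0 ≠ 0 ∨ p 1 ≠ 0 := by
    by_contra h
    push_neg at h
    apply hp0
    ext i
    fin_cases i
    · exact h.1
    · exact h.2
  rcases hp01 with h | h
  · refine ⟨q 0 / p 0, ?_⟩
    ext i
    fin_cases i
    · show q 0 = (q 0 / p 0) • p 0
      rw [smul_eq_mul]; field_simp
    · show q 1 = (q 0 / p 0) • p 1
      rw [smul_eq_mul]; field_simp; nlinarith [hcross]
  · refine ⟨q 1 / p 1, ?_⟩
    ext i
    fin_cases i
    · show q 0 = (q 1 / p 1) • p 0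
      rw [smul_eq_mul]; field_simp; nlinarith [hcross]
    · show q 1 = (q 1 / p 1) • p 1
      rw [smul_eq_mul]; field_simp


lemma aux_equidist {P M1 M2 : EuclideanSpace ℝ (Fin 2)} (h12 : dist M1 M2 = 1)
    (hP : P ∉ affineSpan ℝ ({M1, M2} : Set (EuclideanSpace ℝ (Fin 2))))
    (ha : ∃ z : ℤ, dist P M1 = z) (hb : ∃ z : ℤ, dist P M2 = z) :
    dist P M1 = dist P M2 := by
  obtain ⟨za, hza⟩ := ha
  obtain ⟨zb, hzb⟩ := hb
  have hM12 : M1 ≠ M2 := by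
    intro h; rw [h] at h12; simp at h12
  by_contra hne
  have htri : |dist P M1 - dist P M2| ≤ 1 := by
    have := abs_dist_sub_le M1 M2 P
    rw [dist_comm M1 P, dist_comm M2 P] at this
    linarith [this, le_of_eq h12.symm]
  have hz : za = zb + 1 ∨ zb = za + 1 := by
    have h1 : |(za : ℝ) - zb| ≤ 1 := by rw [← hza, ← hzb]; exact htri
    have h2 : (za : ℝ) ≠ zb := by rw [← hza, ← hzb]; exact hne
    have h1' : |za - zb| ≤ 1 := by
      have h3 : |((za - zb : ℤ) : ℝ)| ≤ ((1:ℤ):ℝ) := by push_cast; exact h1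
      exact_mod_cast h3
    obtain ⟨hl, hr⟩ := abs_le.mp h1'
    have h2' : za ≠ zb := fun h => h2 (by exact_mod_cast h)
    omega
  apply hP
  rcases hz with h | h
  · -- dist P M1 = dist P M2 + 1 = dist P M2 + dist M2 M1
    have : dist P M2 + dist M2 M1 = dist P M1 := by
      rw [dist_comm M2 M1, h12, hza, hzb, h]; push_cast; ring
    have hw : Wbtw ℝ P M2 M1 := dist_add_dist_eq_iff.mp this
    exact hw.collinear.mem_affineSpan_of_mem_of_ne
      (by simp) (by simp) (by simp) hM12
  · have : dist P M1 + dist M1 M2 = dist P M2 := by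
      rw [h12, hza, hzb, h]; push_cast; ring
    have hw : Wbtw ℝ P M1 M2 := dist_add_dist_eq_iff.mp this
    exact hw.collinear.mem_affineSpan_of_mem_of_ne
      (by simp) (by simp) (by simp) hM12

/-- If {M₁, M₂, M₃, M₄} is an integral point set of four points in the plane with
|M₁M₂| = 1, then M₃ or M₄ lies on the line through M₁ and M₂. -/
theorem four_point_set_with_unit_distance (M1 M2 M3 M4 : EuclideanSpace ℝ (Fin 2))
    (hdistinct : ({M1, M2, M3, M4} : Set (EuclideanSpace ℝ (Fin 2))).ncard = 4)
    (hnoncol : ¬ Collinear ℝ ({M1, M2, M3, M4} : Set (EuclideanSpace ℝ (Fin 2))))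
    (hint : ∀ p ∈ ({M1, M2, M3, M4} : Set (EuclideanSpace ℝ (Fin 2))),
      ∀ q ∈ ({M1, M2, M3, M4} : Set (EuclideanSpace ℝ (Fin 2))),
        ∃ z : ℤ, dist p q = (z : ℝ))
    (h12 : dist M1 M2 = 1) :
    M3 ∈ affineSpan ℝ ({M1, M2} : Set (EuclideanSpace ℝ (Fin 2))) ∨
      M4 ∈ affineSpan ℝ ({M1, M2} : Set (EuclideanSpace ℝ (Fin 2))) := by
  by_contra hcon
  push_neg at hcon
  obtain ⟨h3, h4⟩ := hcon
  have hM12 : M1 ≠ M2 := by intro h; rw [h] at h12; simp at h12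
  have h34 : M3 ≠ M4 := by
    intro h
    rw [h] at hdistinct
    have he : ({M1, M2, M4, M4} : Set (EuclideanSpace ℝ (Fin 2))) = {M1, M2, M4} := by
      simp
    rw [he] at hdistinct
    have hle : ({M1, M2, M4} : Set (EuclideanSpace ℝ (Fin 2))).ncard ≤ 3 := by
      refine le_trans (Set.ncard_insert_le _ _) ?_
      have h5 := Set.ncard_insert_le M2 ({M4} : Set (EuclideanSpace ℝ (Fin 2)))
      simp [Set.ncard_singleton] at h5 ⊢
      omega
    omega
  obtain ⟨za, hza⟩ := hint M3 (by simp) M1 (by simp)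
  obtain ⟨zb, hzb⟩ := hint M4 (by simp) M1 (by simp)
  obtain ⟨zk, hzk⟩ := hint M3 (by simp) M4 (by simp)
  have e3 : dist M3 M1 = dist M3 M2 :=
    aux_equidist h12 h3 ⟨za, hza⟩ (hint M3 (by simp) M2 (by simp))
  have e4 : dist M4 M1 = dist M4 M2 :=
    aux_equidist h12 h4 ⟨zb, hzb⟩ (hint M4 (by simp) M2 (by simp))
  set v : EuclideanSpace ℝ (Fin 2) := M2 - M1 with hvdef
  set x : EuclideanSpace ℝ (Fin 2) := M3 - M1 with hxdef
  set y : EuclideanSpace ℝ (Fin 2) := M4 - M1 with hydef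
  have hv1 : ‖v‖ = 1 := by rw [hvdef, ← dist_eq_norm, dist_comm]; exact h12
  have hvne : v ≠ 0 := by intro h; rw [h] at hv1; simp at hv1
  have hxv : ⟪x, v⟫ = 1/2 := by
    have hxsub : x - v = M3 - M2 := by rw [hxdef, hvdef]; abel
    have h1 : ‖x‖ = ‖x - v‖ := by
      rw [hxsub, ← dist_eq_norm, ← dist_eq_norm]; exact e3
    have h2 := norm_sub_sq_real x v
    rw [← h1, hv1] at h2
    nlinarith [h2]
  have hyv : ⟪y, v⟫ = 1/2 := by
    have hysub : y - v = M4 - M2 := by rw [hydef, hvdef]; abel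
    have h1 : ‖y‖ = ‖y - v‖ := by
      rw [hysub, ← dist_eq_norm, ← dist_eq_norm]; exact e4
    have h2 := norm_sub_sq_real y v
    rw [← h1, hv1] at h2
    nlinarith [h2]
  set p : EuclideanSpace ℝ (Fin 2) := x - (1/2 : ℝ) • v with hpdef
  set q : EuclideanSpace ℝ (Fin 2) := y - (1/2 : ℝ) • v with hqdef
  have hpv : ⟪p, v⟫ = 0 := by
    rw [hpdef, inner_sub_left, real_inner_smul_left, real_inner_self_eq_norm_sq, hv1, hxv]
    norm_num
  have hqv : ⟪q, v⟫ = 0 := by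
    rw [hqdef, inner_sub_left, real_inner_smul_left, real_inner_self_eq_norm_sq, hv1, hyv]
    norm_num
  have hp0 : p ≠ 0 := by
    intro h
    apply h3
    have h' : x = (1/2:ℝ) • v := by
      rw [hpdef] at h
      exact sub_eq_zero.mp h
    have hm : M3 = AffineMap.lineMap M1 M2 (1/2 : ℝ) := by
      rw [AffineMap.lineMap_apply_module]
      rw [hxdef, hvdef] at h'
      have h'' := sub_eq_iff_eq_add.mp h'
      rw [h'']
      module
    rw [hm]
    exact AffineMap.lineMap_mem_affineSpan_pair _ _ _
  obtain ⟨c, hc⟩ := aux_parallel v p q hvne hpv hqv hp0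
  have hpn : ‖p‖^2 = (za:ℝ)^2 - 1/4 := by
    have h2 := norm_sub_sq_real x ((1/2:ℝ) • v)
    rw [← hpdef, real_inner_smul_right, hxv, norm_smul, hv1] at h2
    have hnx : ‖x‖ = (za:ℝ) := by rw [hxdef, ← dist_eq_norm]; exact hza
    have hhalf : ‖(1/2 : ℝ)‖ = 1/2 := by norm_num
    rw [hnx, hhalf] at h2
    rw [h2]
    ring
  have hqn : ‖q‖^2 = (zb:ℝ)^2 - 1/4 := by
    have h2 := norm_sub_sq_real y ((1/2:ℝ) • v)
    rw [← hqdef, real_inner_smul_right, hyv, norm_smul, hv1] at h2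
    have hny : ‖y‖ = (zb:ℝ) := by rw [hydef, ← dist_eq_norm]; exact hzb
    have hhalf : ‖(1/2 : ℝ)‖ = 1/2 := by norm_num
    rw [hny, hhalf] at h2
    rw [h2]
    ring
  have hpq : p - q = M3 - M4 := by rw [hpdef, hqdef, hxdef, hydef]; abel
  have hk : ‖p - q‖ = (zk:ℝ) := by rw [hpq, ← dist_eq_norm]; exact hzk
  have hpne : ‖p‖ ≠ 0 := norm_ne_zero_iff.mpr hp0
  apply core_lemma za zb zk ‖p‖ (c * ‖p‖)
  · exact hpn
  · have h6 : ‖(c:ℝ) • p‖^2 = c^2 * ‖p‖^2 := by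
      rw [norm_smul, Real.norm_eq_abs, mul_pow, sq_abs]
    rw [← hqn, hc, h6]
    ring
  · have h5 : p - q = (1-c) • p := by rw [hc, sub_smul, one_smul]
    have h6 : ‖(1-c) • p‖^2 = (1-c)^2 * ‖p‖^2 := by
      rw [norm_smul, Real.norm_eq_abs, mul_pow, sq_abs]
    calc (‖p‖ - c*‖p‖)^2 = (1-c)^2 * ‖p‖^2 := by ring
    _ = ‖(1-c) • p‖^2 := h6.symm
    _ = ‖p - q‖^2 := by rw [h5]
    _ = (zk:ℝ)^2 := by rw [hk]
  · intro h
    apply h34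
    have hc1 : c = 1 := mul_right_cancel₀ hpne (by linarith : c * ‖p‖ = 1 * ‖p‖)
    have hz : M3 - M4 = 0 := by rw [← hpq, hc, hc1, one_smul, sub_self]
    exact sub_eq_zero.mp hz
end

section
/- Let k ≥ 1; set a = 2^{2^k} − 1 and, for a subset J of {1, ..., k−1}, let c_J = ∏_{j∈J} (2^{2^j} + 1) (with c_∅ = 1). Then c_J divides a, c_J ≡ 1 (mod 4), a/c_J ≡ 3 (mod 4), b_J := (c_J − a/c_J)/2 is an odd integer, and g_J := (c_J + a/c_J)/2 is an even integer. -/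
lemma prod_fermat_range (k : ℕ) :
    ∏ j ∈ Finset.range k, ((2 : ℤ) ^ (2 ^ j) + 1) = 2 ^ (2 ^ k) - 1 := by
  induction k with
  | zero => norm_num
  | succ n ih =>
      rw [Finset.prod_range_succ, ih, pow_succ, pow_mul]
      ring

lemma prod_fermat_mod (s : Finset ℕ) (hs : ∀ j ∈ s, 1 ≤ j) :
    (∏ j ∈ s, ((2 : ℤ) ^ (2 ^ j) + 1)) % 4 = 1 := by
  rw [Finset.prod_int_mod]
  have : ∀ j ∈ s, ((2 : ℤ) ^ (2 ^ j) + 1) % 4 = 1 := by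
    intro j hj
    have h2 : 2 ≤ 2 ^ j := by
      have := hs j hj
      calc 2 = 2 ^ 1 := rfl
        _ ≤ 2 ^ j := Nat.pow_le_pow_right (by norm_num) this
    have hd : (4 : ℤ) ∣ 2 ^ (2 ^ j) := by
      have : (2 : ℤ) ^ 2 ∣ 2 ^ (2 ^ j) := pow_dvd_pow 2 h2
      simpa using this
    obtain ⟨m, hm⟩ := hd
    omega
  rw [Finset.prod_congr rfl this]
  simp

/-- For k ≥ 1, a = 2^{2^k} − 1 and c_J = ∏_{j∈J} (2^{2^j} + 1) over J ⊆ {1,…,k−1}: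
c_J divides a, c_J ≡ 1 (mod 4), a/c_J ≡ 3 (mod 4), b_J = (c_J − a/c_J)/2 is an odd
integer and g_J = (c_J + a/c_J)/2 is an even integer. -/
theorem c_J_properties (k : ℕ) (hk : 1 ≤ k) (J : Finset ℕ)
    (hJ : J ⊆ Finset.Icc 1 (k - 1)) :
    ((∏ j ∈ J, ((2 : ℤ) ^ (2 ^ j) + 1)) ∣ (2 ^ (2 ^ k) - 1)) ∧
    (∏ j ∈ J, ((2 : ℤ) ^ (2 ^ j) + 1)) % 4 = 1 ∧
    (((2 : ℤ) ^ (2 ^ k) - 1) / ∏ j ∈ J, ((2 : ℤ) ^ (2 ^ j) + 1)) % 4 = 3 ∧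
    (∃ b : ℤ, Odd b ∧
      2 * b = (∏ j ∈ J, ((2 : ℤ) ^ (2 ^ j) + 1)) -
        ((2 : ℤ) ^ (2 ^ k) - 1) / ∏ j ∈ J, ((2 : ℤ) ^ (2 ^ j) + 1)) ∧
    (∃ g : ℤ, Even g ∧
      2 * g = (∏ j ∈ J, ((2 : ℤ) ^ (2 ^ j) + 1)) +
        ((2 : ℤ) ^ (2 ^ k) - 1) / ∏ j ∈ J, ((2 : ℤ) ^ (2 ^ j) + 1)) := by
  set f : ℕ → ℤ := fun j => (2 : ℤ) ^ (2 ^ j) + 1 with hf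
  have hJmem : ∀ j ∈ J, 1 ≤ j := fun j hj => (Finset.mem_Icc.mp (hJ hj)).1
  have hJrange : J ⊆ Finset.range k := by
    intro j hj
    have := Finset.mem_Icc.mp (hJ hj)
    exact Finset.mem_range.mpr (by omega)
  -- key product identity
  have hsplit : (∏ j ∈ Finset.range k \ J, f j) * ∏ j ∈ J, f j = 2 ^ (2 ^ k) - 1 := by
    rw [Finset.prod_sdiff hJrange]
    exact prod_fermat_range k
  have hc : (∏ j ∈ J, f j) % 4 = 1 := prod_fermat_mod J hJmem
  have hcne : (∏ j ∈ J, f j) ≠ 0 := by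
    intro h; rw [h] at hc; norm_num at hc
  have hdvd : (∏ j ∈ J, f j) ∣ (2 ^ (2 ^ k) - 1 : ℤ) :=
    ⟨∏ j ∈ Finset.range k \ J, f j, by rw [← hsplit]; ring⟩
  have hdiv : ((2 : ℤ) ^ (2 ^ k) - 1) / (∏ j ∈ J, f j) = ∏ j ∈ Finset.range k \ J, f j := by
    rw [← hsplit, Int.mul_ediv_cancel _ hcne]
  -- 0 belongs to the complement
  have h0 : 0 ∈ Finset.range k \ J := by
    rw [Finset.mem_sdiff]
    refine ⟨Finset.mem_range.mpr (by omega), fun h => ?_⟩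
    have := hJmem 0 h; omega
  have hdmod : (∏ j ∈ Finset.range k \ J, f j) % 4 = 3 := by
    rw [← Finset.mul_prod_erase _ f h0]
    have h1 : ∀ j ∈ (Finset.range k \ J).erase 0, 1 ≤ j := by
      intro j hj
      have := (Finset.mem_erase.mp hj).1
      omega
    have := prod_fermat_mod _ h1
    have hf0 : f 0 = 3 := by norm_num [hf]
    rw [hf0]
    simp only [hf] at this ⊢
    omega
  refine ⟨hdvd, hc, ?_, ?_, ?_⟩
  · rw [hdiv]; exact hdmod
  · refine ⟨((∏ j ∈ J, f j) - ((2 : ℤ) ^ (2 ^ k) - 1) / (∏ j ∈ J, f j)) / 2, ?_, ?_⟩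
    · rw [Int.odd_iff, hdiv]; simp only [hf] at hc hdmod ⊢; omega
    · rw [hdiv]; simp only [hf] at hc hdmod ⊢; omega
  · refine ⟨((∏ j ∈ J, f j) + ((2 : ℤ) ^ (2 ^ k) - 1) / (∏ j ∈ J, f j)) / 2, ?_, ?_⟩
    · rw [Int.even_iff, hdiv]; simp only [hf] at hc hdmod ⊢; omega
    · rw [hdiv]; simp only [hf] at hc hdmod ⊢; omega
end

section
/- For every integer n ≥ 3 there exists an integral point set M of n points in the plane (points not all collinear, all pairwise distances integers) containing two points at distance exactly 1, and moreover M can be taken to consist of n−1 collinear points together with one point off that line. -/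
open Real Finset

noncomputable def pt (x y : ℝ) : EuclideanSpace ℝ (Fin 2) := WithLp.toLp 2 ![x, y]

lemma pt_apply_zero (x y : ℝ) : pt x y 0 = x := rfl
lemma pt_apply_one (x y : ℝ) : pt x y 1 = y := rfl

lemma pt_inj {x y u v : ℝ} (h : pt x y = pt u v) : x = u ∧ y = v :=
  ⟨congrArg (· 0) h, congrArg (· 1) h⟩

lemma dist_pt (a b c d : ℝ) :
    dist (pt a b) (pt c d) = Real.sqrt ((a - c)^2 + (b - d)^2) := by
  rw [EuclideanSpace.dist_eq, Fin.sum_univ_two]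
  simp [pt, Real.dist_eq, sq_abs]

lemma dist_pt_base (a c : ℝ) : dist (pt a 0) (pt c 0) = |a - c| := by
  rw [dist_pt]
  simp [Real.sqrt_sq_eq_abs]

lemma smul_vadd_apply (r : ℝ) (v p : EuclideanSpace ℝ (Fin 2)) (i : Fin 2) :
    (r • v +ᵥ p) i = r * v i + p i := rfl

lemma five_pow_modeq (k : ℕ) : (5:ℤ)^k ≡ 1 [ZMOD 4] := by
  calc (5:ℤ)^k ≡ 1^k [ZMOD 4] := (by decide : (5:ℤ) ≡ 1 [ZMOD 4]).pow k
  _ = 1 := one_pow k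

/-- For every n ≥ 3 there is a planar integral point set of n points containing
two points at distance exactly 1, consisting of n−1 collinear points together
with one point off that line. -/
theorem exists_integral_point_set_with_unit_distance (n : ℕ) (hn : 3 ≤ n) :
    ∃ M : Finset (EuclideanSpace ℝ (Fin 2)),
      M.card = n ∧
      ¬ Collinear ℝ (M : Set (EuclideanSpace ℝ (Fin 2))) ∧
      (∀ p ∈ M, ∀ q ∈ M, ∃ z : ℤ, dist p q = (z : ℝ)) ∧
      (∃ p ∈ M, ∃ q ∈ M, dist p q = 1) ∧
      (∃ A ∈ M, Collinear ℝ ((M : Set (EuclideanSpace ℝ (Fin 2))) \ {A})) := by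
  classical
  set t : ℕ := n - 3 with htdef
  set a : ℤ := 5 ^ t with hadef
  have ha1 : 1 ≤ a := one_le_pow₀ (by norm_num)
  -- the "m" of the construction, as a real number
  set mR : ℝ := ((a : ℝ) + 1) / 2 with hmRdef
  have haR : (1 : ℝ) ≤ (a : ℝ) := by exact_mod_cast ha1
  have hmR1 : 1 ≤ mR := by rw [hmRdef]; linarith
  -- m is an integer
  have hmdvd : (2:ℤ) ∣ a + 1 := by
    have := five_pow_modeq t
    have h0 : a + 1 ≡ 2 [ZMOD 4] := this.add_right 1
    have : (4:ℤ) ∣ (a + 1) - 2 := Int.ModEq.dvd h0.symm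
    omega
  obtain ⟨mZ, hmZ⟩ := hmdvd
  have hmZR : (mZ : ℝ) = mR := by
    rw [hmRdef]
    have : ((a:ℝ) + 1) = 2 * (mZ:ℝ) := by exact_mod_cast hmZ
    linarith
  -- apex height
  set h : ℝ := Real.sqrt (mR^2 - 1/4) with hhdef
  have hmRsq : (0:ℝ) < mR^2 - 1/4 := by nlinarith
  have hh2 : h^2 = mR^2 - 1/4 := Real.sq_sqrt (le_of_lt hmRsq)
  have hhpos : 0 < h := Real.sqrt_pos.mpr hmRsq
  set T : EuclideanSpace ℝ (Fin 2) := pt (1/2) h with hTdef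
  -- the integer x-coordinates
  have hdvdX : ∀ j : ℕ, (4:ℤ) ∣ 5^(t-j) * (a + 2) - 5^j + 2 := by
    intro j
    have h1 : 5^(t-j) * (a + 2) - 5^j + 2 ≡ 1 * (1 + 2) - 1 + 2 [ZMOD 4] :=
      (((five_pow_modeq (t-j)).mul ((five_pow_modeq t).add_right 2)).sub
        (five_pow_modeq j)).add_right 2
    have : 5^(t-j) * (a + 2) - 5^j + 2 ≡ 0 [ZMOD 4] := h1.trans (by decide)
    exact (Int.modEq_zero_iff_dvd).mp this
  have hdvdY : ∀ j : ℕ, (4:ℤ) ∣ 5^(t-j) * (a + 2) + 5^j := by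
    intro j
    have h1 : 5^(t-j) * (a + 2) + 5^j ≡ 1 * (1 + 2) + 1 [ZMOD 4] :=
      ((five_pow_modeq (t-j)).mul ((five_pow_modeq t).add_right 2)).add
        (five_pow_modeq j)
    have : 5^(t-j) * (a + 2) + 5^j ≡ 0 [ZMOD 4] := h1.trans (by decide)
    exact (Int.modEq_zero_iff_dvd).mp this
  set X : ℕ → ℤ := fun j => (5^(t-j) * (a + 2) - 5^j + 2) / 4 with hXdef
  set Y : ℕ → ℤ := fun j => (5^(t-j) * (a + 2) + 5^j) / 4 with hYdef
  have hX4 : ∀ j, 4 * X j = 5^(t-j) * (a + 2) - 5^j + 2 := fun j =>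
    Int.mul_ediv_cancel' (hdvdX j)
  have hY4 : ∀ j, 4 * Y j = 5^(t-j) * (a + 2) + 5^j := fun j =>
    Int.mul_ediv_cancel' (hdvdY j)
  -- product identity for j ≤ t
  have hED : ∀ j ≤ t, (5:ℤ)^(t-j) * 5^j = a := by
    intro j hj
    rw [hadef, ← pow_add, Nat.sub_add_cancel hj]
  -- the key quadratic identity
  have hkey : ∀ j ≤ t, ((Y j : ℝ))^2 = ((X j : ℝ))^2 - (X j : ℝ) + mR^2 := by
    intro j hj
    have hZ : (4 * Y j)^2 = (4 * X j)^2 - 4 * (4 * X j) + 4 * (a+1)^2 := by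
      rw [hX4 j, hY4 j]
      have := hED j hj
      linear_combination (4 * (a + 2)) * this
    have hZR : (4 * (Y j : ℝ))^2 = (4 * (X j : ℝ))^2 - 4 * (4 * (X j : ℝ)) + 4 * ((a:ℝ)+1)^2 := by
      exact_mod_cast hZ
    rw [hmRdef]
    linear_combination (1/16) * hZR
  -- Y j is nonnegative and positivity facts for X
  have hYpos : ∀ j, 0 < Y j := by
    intro j
    have h5a : (0:ℤ) < 5^(t-j) * (a + 2) + 5^j := by positivity
    have := hY4 j
    omega
  have hXpos : ∀ j ≤ t, 1 ≤ X j := by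
    intro j hj
    have h1 : (5:ℤ)^j ≤ 5^t := pow_le_pow_right₀ (by norm_num) hj
    have h2 : (1:ℤ) ≤ 5^(t-j) := one_le_pow₀ (by norm_num)
    have h3 : a + 2 ≤ 5^(t-j) * (a + 2) := le_mul_of_one_le_left (by linarith) h2
    have := hX4 j
    omega
  have hXt : X t = 1 := by
    have := hX4 t
    simp only [Nat.sub_self, pow_zero, one_mul] at this
    omega
  -- strict antitonicity of X on [0, t]
  have hXanti : ∀ i j, i < j → j ≤ t → X j < X i := by
    intro i j hij hjt
    have h1 : (5:ℤ)^(t-j) < 5^(t-i) :=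
      pow_lt_pow_right₀ (by norm_num) (by omega)
    have h2 : (5:ℤ)^i < 5^j := pow_lt_pow_right₀ (by norm_num) hij
    have e1 := hX4 i
    have e2 := hX4 j
    have h3 : (0:ℤ) < a + 2 := by linarith
    nlinarith
  -- the finite set
  set Bs : Finset (EuclideanSpace ℝ (Fin 2)) :=
    insert (pt 0 0) ((Finset.range (t+1)).image (fun j => pt (X j : ℝ) 0)) with hBsdef
  set M : Finset (EuclideanSpace ℝ (Fin 2)) := insert T Bs with hMdef
  have hTnotBs : T ∉ Bs := by
    rw [hBsdef]
    simp only [Finset.mem_insert, Finset.mem_image, Finset.mem_range]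
    push_neg
    constructor
    · intro hc
      have := (pt_inj hc).2
      linarith
    · intro j _ hc
      have := (pt_inj hc.symm).2
      linarith
  have hinj : Set.InjOn (fun j => pt (X j : ℝ) 0) (Finset.range (t+1)) := by
    intro i hi j hj hij
    simp only [Finset.coe_range, Set.mem_Iio] at hi hj
    have hXij : X i = X j := by
      have := (pt_inj hij).1
      exact_mod_cast this
    by_contra hne
    rcases lt_or_gt_of_ne hne with hlt | hlt
    · have := hXanti i j hlt (by omega); omega
    · have := hXanti j i hlt (by omega); omega
  have h00notim : pt 0 0 ∉ (Finset.range (t+1)).image (fun j => pt (X j : ℝ) 0) := by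
    simp only [Finset.mem_image, Finset.mem_range]
    rintro ⟨j, hj, hc⟩
    have h1 := (pt_inj hc).1
    have h2 := hXpos j (by omega)
    have : ((X j : ℝ)) = 0 := h1
    have : X j = 0 := by exact_mod_cast this
    omega
  have hcard : M.card = n := by
    rw [hMdef, Finset.card_insert_of_notMem hTnotBs, hBsdef,
      Finset.card_insert_of_notMem h00notim, Finset.card_image_of_injOn hinj,
      Finset.card_range]
    omega
  -- membership characterization
  have hmem : ∀ p ∈ M, p = T ∨ ∃ x y : ℤ, p = pt (x:ℝ) 0 ∧ 0 ≤ y ∧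
      ((y:ℝ))^2 = ((x:ℝ))^2 - (x:ℝ) + mR^2 := by
    intro p hp
    rw [hMdef, Finset.mem_insert] at hp
    rcases hp with hp | hp
    · exact Or.inl hp
    · right
      rw [hBsdef, Finset.mem_insert] at hp
      rcases hp with hp | hp
      · exact ⟨0, mZ, by simpa using hp, by linarith [ha1, hmZ], by
          push_cast
          rw [hmZR]; ring⟩
      · simp only [Finset.mem_image, Finset.mem_range] at hp
        obtain ⟨j, hj, hpj⟩ := hp
        exact ⟨X j, Y j, hpj.symm, le_of_lt (hYpos j), hkey j (by omega)⟩
  -- apex distance lemma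
  have hdistT : ∀ x y : ℤ, 0 ≤ y →
      ((y:ℝ))^2 = ((x:ℝ))^2 - (x:ℝ) + mR^2 → dist (pt (x:ℝ) 0) T = (y:ℝ) := by
    intro x y hy hxy
    rw [hTdef, dist_pt]
    have : ((x:ℝ) - 1/2)^2 + (0 - h)^2 = (y:ℝ)^2 := by
      have : (0 - h)^2 = mR^2 - 1/4 := by rw [← hh2]; ring
      rw [this]; rw [hxy]; ring
    rw [this]
    exact Real.sqrt_sq (by exact_mod_cast hy)
  -- integrality of all distances
  have hintdist : ∀ p ∈ M, ∀ q ∈ M, ∃ z : ℤ, dist p q = (z : ℝ) := by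
    intro p hp q hq
    rcases hmem p hp with hpT | ⟨x, y, hpx, hy, hxy⟩
    · rcases hmem q hq with hqT | ⟨x', y', hqx, hy', hxy'⟩
      · exact ⟨0, by rw [hpT, hqT]; simp⟩
      · refine ⟨y', ?_⟩
        rw [hpT, hqx, dist_comm]
        exact hdistT x' y' hy' hxy'
    · rcases hmem q hq with hqT | ⟨x', y', hqx, hy', hxy'⟩
      · refine ⟨y, ?_⟩
        rw [hpx, hqT]
        exact hdistT x y hy hxy
      · refine ⟨|x - x'|, ?_⟩
        rw [hpx, hqx, dist_pt_base]
        push_cast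
        ring_nf
  -- special points
  have hT_mem : T ∈ M := by rw [hMdef]; exact Finset.mem_insert_self _ _
  have h00_mem : pt 0 0 ∈ M := by
    rw [hMdef, hBsdef]
    exact Finset.mem_insert_of_mem (Finset.mem_insert_self _ _)
  have h10_mem : pt 1 0 ∈ M := by
    rw [hMdef, hBsdef]
    refine Finset.mem_insert_of_mem (Finset.mem_insert_of_mem ?_)
    refine Finset.mem_image.mpr ⟨t, ?_, ?_⟩
    · exact Finset.mem_range.mpr (by omega)
    · rw [hXt]; norm_num
  -- noncollinearity
  have hnoncol : ¬ Collinear ℝ (M : Set (EuclideanSpace ℝ (Fin 2))) := by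
    intro hcol
    rw [collinear_iff_of_mem (by exact_mod_cast h00_mem)] at hcol
    obtain ⟨v, hv⟩ := hcol
    obtain ⟨r, hr⟩ := hv (pt 1 0) (by exact_mod_cast h10_mem)
    obtain ⟨s, hs⟩ := hv T (by exact_mod_cast hT_mem)
    have h1 : (1:ℝ) = r * v 0 + 0 := congrArg (· 0) hr
    have h2 : (0:ℝ) = r * v 1 + 0 := congrArg (· 1) hr
    have h3 : h = s * v 1 + 0 := congrArg (· 1) hs
    have hr0 : r ≠ 0 := by
      intro hc; rw [hc] at h1; simp at h1
    have hv1 : v 1 = 0 := by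
      have : r * v 1 = 0 := by linarith
      exact (mul_eq_zero.mp this).resolve_left hr0
    rw [hv1] at h3
    simp at h3
    linarith
  -- collinearity of M \ {T}
  have hcolbase : Collinear ℝ ((M : Set (EuclideanSpace ℝ (Fin 2))) \ {T}) := by
    apply Collinear.subset (s₂ := (fun x : ℝ => pt x 0) '' Set.univ)
    · rintro p ⟨hpM, hpT⟩
      rcases hmem p (by exact_mod_cast hpM) with hp | ⟨x, y, hpx, _, _⟩
      · exact absurd hp hpT
      · exact ⟨(x:ℝ), Set.mem_univ _, hpx.symm⟩
    · rw [collinear_iff_exists_forall_eq_smul_vadd]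
      refine ⟨pt 0 0, pt 1 0, ?_⟩
      rintro p ⟨x, -, rfl⟩
      refine ⟨x, ?_⟩
      apply PiLp.ext; intro i
      rw [smul_vadd_apply]
      fin_cases i <;> simp [pt_apply_zero, pt_apply_one, pt]
  refine ⟨M, hcard, hnoncol, hintdist, ⟨pt 0 0, h00_mem, pt 1 0, h10_mem, ?_⟩,
    ⟨T, hT_mem, hcolbase⟩⟩
  rw [dist_pt_base]
  norm_num
end

section
/- If M is an integral point set of n ≥ 4 points in the plane containing two points M₁, M₂ with |M₁M₂| = 1, then the distance 1 occurs in M exactly once, all points of M except one lie on the line through M₁ and M₂, and the remaining point lies on the perpendicular bisector of the segment M₁M₂. -/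
/-- Integer solutions of `r² - r + 1 = e²` have `r = 0` or `r = 1`. -/
lemma aux_sq_int (r e : ℤ) (h : r^2 - r + 1 = e^2) : r = 0 ∨ r = 1 := by
  have h3 : (2*e - 2*r + 1) * (2*e + 2*r - 1) = 3 := by linear_combination -4*h
  obtain ⟨a, ha⟩ : ∃ a, a = 2*e - 2*r + 1 := ⟨_, rfl⟩
  obtain ⟨b, hb⟩ : ∃ b, b = 2*e + 2*r - 1 := ⟨_, rfl⟩
  rw [← ha, ← hb] at h3
  have hd1 : a ∣ 3 := ⟨b, h3.symm⟩
  have hb1 : a ≤ 3 := Int.le_of_dvd (by norm_num) hd1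
  have hb2 : -3 ≤ a := by
    have := Int.le_of_dvd (show (0:ℤ) < 3 by norm_num) ((neg_dvd).mpr hd1)
    linarith
  interval_cases a <;> omega

/-- No real number equal to a rational has square `4k² - 1`. -/
lemma aux_no_rat_sqrt (k : ℤ) (x : ℝ) (q : ℚ) (hq : x = (q:ℝ))
    (hx : x^2 = 4*(k:ℝ)^2 - 1) : False := by
  have h1 : x ^ (2:ℕ) = ((4*k^2 - 1 : ℤ) : ℝ) := by push_cast; exact hx
  have h2 : ¬ Irrational x := by rw [hq]; exact Rat.not_irrational q
  have h3 : ∃ y : ℤ, x = y := by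
    by_contra hc
    exact h2 (irrational_nrt_of_notint_nrt 2 _ h1 hc (by norm_num))
  obtain ⟨y, hy⟩ := h3
  have h4 : (y:ℝ)^2 = 4*(k:ℝ)^2 - 1 := by rw [← hy]; exact hx
  have h5 : y^2 = 4*k^2 - 1 := by exact_mod_cast h4
  rcases Int.even_or_odd y with ⟨c, hc⟩ | ⟨c, hc⟩
  · have h6 : 4*(c^2 - k^2) = -1 := by rw [hc] at h5; nlinarith [h5]
    have : (4:ℤ) ∣ -1 := ⟨c^2 - k^2, h6.symm⟩
    norm_num at this
  · have h6 : 2*(c^2 + c - k^2) = -1 := by rw [hc] at h5; nlinarith [h5]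
    have : (2:ℤ) ∣ -1 := ⟨c^2 + c - k^2, h6.symm⟩
    norm_num at this

/-- In the plane, two vectors orthogonal to a nonzero vector are parallel. -/
lemma aux_perp (v x y : EuclideanSpace ℝ (Fin 2)) (hv : v ≠ 0)
    (hxv : inner ℝ x v = (0:ℝ)) (hyv : inner ℝ y v = (0:ℝ)) (hx : x ≠ 0) :
    ∃ t : ℝ, y = t • x := by
  have hx' : x 0 * v 0 + x 1 * v 1 = 0 := by
    simpa [PiLp.inner_apply, RCLike.inner_apply, Fin.sum_univ_two, mul_comm] using hxv
  have hy' : y 0 * v 0 + y 1 * v 1 = 0 := by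
    simpa [PiLp.inner_apply, RCLike.inner_apply, Fin.sum_univ_two, mul_comm] using hyv
  have hvc : v 0 ≠ 0 ∨ v 1 ≠ 0 := by
    by_contra hc
    push_neg at hc
    exact hv (by ext i; fin_cases i <;> simp [hc.1, hc.2])
  have hdet : x 0 * y 1 - x 1 * y 0 = 0 := by
    rcases hvc with h | h
    · have : (x 0 * y 1 - x 1 * y 0) * v 0 = 0 := by linear_combination y 1 * hx' - x 1 * hy'
      exact (mul_eq_zero.mp this).resolve_right h
    · have : (x 0 * y 1 - x 1 * y 0) * v 1 = 0 := by linear_combination x 0 * hy' - y 0 * hx'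
      exact (mul_eq_zero.mp this).resolve_right h
  have hxc : x 0 ≠ 0 ∨ x 1 ≠ 0 := by
    by_contra hc
    push_neg at hc
    exact hx (by ext i; fin_cases i <;> simp [hc.1, hc.2])
  rcases hxc with h | h
  · refine ⟨y 0 / x 0, ?_⟩
    ext i
    fin_cases i
    · show y 0 = y 0 / x 0 * x 0
      field_simp
    · show y 1 = y 0 / x 0 * x 1
      field_simp
      linear_combination hdet
  · refine ⟨y 1 / x 1, ?_⟩
    ext i
    fin_cases i
    · show y 0 = y 1 / x 1 * x 0
      field_simp
      linear_combination -hdet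
    · show y 1 = y 1 / x 1 * x 1
      field_simp

set_option maxHeartbeats 1000000 in
/-- If M is a planar integral point set of n ≥ 4 points containing M₁, M₂ with
|M₁M₂| = 1, then the distance 1 occurs exactly once in M, all points of M except
one lie on the line through M₁ and M₂, and the remaining point lies on the
perpendicular bisector of M₁M₂ (i.e. is equidistant from M₁ and M₂). -/
theorem structure_of_integral_point_set_with_unit_distance
    (M : Finset (EuclideanSpace ℝ (Fin 2))) (n : ℕ) (hn : 4 ≤ n) (hcard : M.card = n)
    (hnoncol : ¬ Collinear ℝ (M : Set (EuclideanSpace ℝ (Fin 2))))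
    (hint : ∀ p ∈ M, ∀ q ∈ M, ∃ z : ℤ, dist p q = (z : ℝ))
    (M1 M2 : EuclideanSpace ℝ (Fin 2)) (hM1 : M1 ∈ M) (hM2 : M2 ∈ M)
    (h12 : dist M1 M2 = 1) :
    (∀ p ∈ M, ∀ q ∈ M, dist p q = 1 →
      ({p, q} : Set (EuclideanSpace ℝ (Fin 2))) = {M1, M2}) ∧
    (∃ A ∈ M, A ∉ affineSpan ℝ ({M1, M2} : Set (EuclideanSpace ℝ (Fin 2))) ∧
      dist A M1 = dist A M2 ∧
      ∀ p ∈ M, p ≠ A → p ∈ affineSpan ℝ ({M1, M2} : Set (EuclideanSpace ℝ (Fin 2)))) := by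
  classical
  have hM12 : M1 ≠ M2 := by
    intro h; rw [h, dist_self] at h12; norm_num at h12
  set v : EuclideanSpace ℝ (Fin 2) := M2 - M1 with hvdef
  have hvn : ‖v‖ = 1 := by rw [hvdef, ← dist_eq_norm, dist_comm]; exact h12
  have hv0 : v ≠ 0 := by
    rw [hvdef, sub_ne_zero]; exact fun h => hM12 h.symm
  set L := affineSpan ℝ ({M1, M2} : Set (EuclideanSpace ℝ (Fin 2))) with hLdef
  -- membership in the line
  have hmemL : ∀ p : EuclideanSpace ℝ (Fin 2), p ∈ L ↔ ∃ s : ℝ, p - M1 = s • v := by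
    intro p
    constructor
    · intro hp
      have h1 : (p - M1) +ᵥ M1 ∈ line[ℝ, M1, M2] := by
        simpa [vadd_eq_add, sub_add_cancel] using hp
      obtain ⟨r, hr⟩ := vadd_left_mem_affineSpan_pair.mp h1
      exact ⟨r, by rw [← hr]; rfl⟩
    · rintro ⟨s, hs⟩
      have h1 : s • (M2 -ᵥ M1) +ᵥ M1 ∈ line[ℝ, M1, M2] :=
        vadd_left_mem_affineSpan_pair.mpr ⟨s, rfl⟩
      have h2 : s • (M2 -ᵥ M1) +ᵥ M1 = p := by
        rw [vsub_eq_sub, vadd_eq_add, ← hvdef, ← hs]; abel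
      rwa [h2] at h1
  have hM1L : M1 ∈ L := left_mem_affineSpan_pair ℝ M1 M2
  have hM2L : M2 ∈ L := right_mem_affineSpan_pair ℝ M1 M2
  -- generic dichotomy
  have dichot : ∀ p q r : EuclideanSpace ℝ (Fin 2), dist q r = 1 →
      p ∉ affineSpan ℝ ({q, r} : Set (EuclideanSpace ℝ (Fin 2))) →
      (∃ z : ℤ, dist p q = z) → (∃ z : ℤ, dist p r = z) →
      dist p q = dist p r := by
    rintro p q r hqr hps ⟨z1, hz1⟩ ⟨z2, hz2⟩
    have hqr' : q ≠ r := by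
      intro h; rw [h, dist_self] at hqr; norm_num at hqr
    have t1 : (z1:ℝ) ≤ (z2:ℝ) + 1 := by
      rw [← hz1, ← hz2]
      calc dist p q ≤ dist p r + dist r q := dist_triangle _ _ _
        _ = dist p r + 1 := by rw [dist_comm r q, hqr]
    have t2 : (z2:ℝ) ≤ (z1:ℝ) + 1 := by
      rw [← hz1, ← hz2]
      calc dist p r ≤ dist p q + dist q r := dist_triangle _ _ _
        _ = dist p q + 1 := by rw [hqr]
    have i1 : z1 ≤ z2 + 1 := by exact_mod_cast t1
    have i2 : z2 ≤ z1 + 1 := by exact_mod_cast t2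
    rcases (by omega : z1 = z2 ∨ z1 = z2 + 1 ∨ z2 = z1 + 1) with h | h | h
    · rw [hz1, hz2, h]
    · exfalso
      have hb : dist p r + dist r q = dist p q := by
        rw [hz1, hz2, h, dist_comm r q, hqr]; push_cast; ring
      have hw : Wbtw ℝ p r q := dist_add_dist_eq_iff.mp hb
      have hcol : Collinear ℝ ({p, r, q} : Set (EuclideanSpace ℝ (Fin 2))) := hw.collinear
      exact hps (hcol.mem_affineSpan_of_mem_of_ne (by simp) (by simp) (by simp) hqr')
    · exfalso
      have hb : dist p q + dist q r = dist p r := by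
        rw [hz1, hz2, h, hqr]; push_cast; ring
      have hw : Wbtw ℝ p q r := dist_add_dist_eq_iff.mp hb
      have hcol : Collinear ℝ ({p, q, r} : Set (EuclideanSpace ℝ (Fin 2))) := hw.collinear
      exact hps (hcol.mem_affineSpan_of_mem_of_ne (by simp) (by simp) (by simp) hqr')
  -- equidistant implies perpendicular
  have hperp : ∀ p : EuclideanSpace ℝ (Fin 2), dist p M1 = dist p M2 →
      inner ℝ (p - M1 - (2⁻¹:ℝ) • v) v = (0:ℝ) := by
    intro p h
    have e1 : p - M2 = p - M1 - v := by rw [hvdef]; abel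
    have h2 : ‖p - M1‖ ^ 2 = ‖p - M1 - v‖ ^ 2 := by
      rw [dist_eq_norm, dist_eq_norm, e1] at h; rw [h]
    rw [norm_sub_sq_real (p - M1) v] at h2
    have hv2 : ‖v‖ ^ 2 = 1 := by rw [hvn]; norm_num
    have hin : inner ℝ (p - M1) v = (1/2 : ℝ) := by
      rw [hv2] at h2; linarith
    rw [inner_sub_left, real_inner_smul_left, real_inner_self_eq_norm_sq, hv2, hin]
    norm_num
  -- norm of orthogonal decomposition
  have hns : ∀ (x : EuclideanSpace ℝ (Fin 2)) (s : ℝ), inner ℝ x v = (0:ℝ) →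
      ‖x + s • v‖ ^ 2 = ‖x‖ ^ 2 + s ^ 2 := by
    intro x s hx
    rw [norm_add_sq_real, real_inner_smul_right, hx, norm_smul, Real.norm_eq_abs, hvn]
    rw [mul_one, mul_zero, mul_zero, add_zero, sq_abs]
  -- points of M on the line have integer parameter
  have honline : ∀ p ∈ M, p ∈ L → ∃ z : ℤ, p - M1 = (z:ℝ) • v := by
    intro p hp hpL
    obtain ⟨s, hs⟩ := (hmemL p).mp hpL
    obtain ⟨z, hz⟩ := hint p hp M1 hM1
    have habs : |s| = (z:ℝ) := by
      rw [← hz, dist_eq_norm, hs, norm_smul, Real.norm_eq_abs, hvn, mul_one]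
    rcases abs_cases s with ⟨h1, _⟩ | ⟨h1, _⟩
    · exact ⟨z, by rw [hs, ← habs, h1]⟩
    · refine ⟨-z, ?_⟩
      rw [hs]
      congr 1
      push_cast
      rw [← habs, h1]
      ring
  -- off-line points: perpendicularity
  have hoff : ∀ p ∈ M, p ∉ L → inner ℝ (p - M1 - (2⁻¹:ℝ) • v) v = (0:ℝ) := by
    intro p hp hpL
    exact hperp p (dichot p M1 M2 h12 hpL (hint p hp M1 hM1) (hint p hp M2 hM2))
  have hxne : ∀ p : EuclideanSpace ℝ (Fin 2), p ∉ L → p - M1 - (2⁻¹:ℝ) • v ≠ 0 := by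
    intro p hpL h0
    apply hpL
    rw [hmemL]
    exact ⟨2⁻¹, sub_eq_zero.mp h0⟩
  -- distance from an off-line "perpendicular" point to a line point
  have hdist_gen : ∀ (p : EuclideanSpace ℝ (Fin 2)) (s : ℝ),
      inner ℝ (p - M1 - (2⁻¹:ℝ) • v) v = (0:ℝ) →
      dist p (M1 + s • v) ^ 2 = ‖p - M1 - (2⁻¹:ℝ) • v‖ ^ 2 + (2⁻¹ - s) ^ 2 := by
    intro p s hp
    have e1 : p - (M1 + s • v) = (p - M1 - (2⁻¹:ℝ) • v) + (2⁻¹ - s) • v := by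
      rw [sub_smul]; abel
    rw [dist_eq_norm, e1, hns _ _ hp]
  -- uniqueness of off-line points
  have huniq : ∀ p ∈ M, p ∉ L → ∀ q ∈ M, q ∉ L → p = q := by
    intro p hp hpL q hq hqL
    by_contra hne
    have hpv := hoff p hp hpL
    have hqv := hoff q hq hqL
    obtain ⟨t, ht⟩ := aux_perp v _ _ hv0 hpv hqv (hxne p hpL)
    obtain ⟨zk, hzk⟩ := hint p hp M1 hM1
    obtain ⟨zm, hzm⟩ := hint q hq M1 hM1
    obtain ⟨zd, hzd⟩ := hint p hp q hq
    set c := ‖p - M1 - (2⁻¹:ℝ) • v‖ with hc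
    have hM10 : M1 + (0:ℝ) • v = M1 := by simp
    have hk2 : (zk:ℝ)^2 = c^2 + 4⁻¹ := by
      have h0 := hdist_gen p 0 hpv
      rw [hM10, hzk, ← hc] at h0
      rw [h0]; norm_num
    have hxq2 : ‖q - M1 - (2⁻¹:ℝ) • v‖^2 = t^2 * c^2 := by
      rw [ht, norm_smul, Real.norm_eq_abs, mul_pow, sq_abs, hc]
    have hm2 : (zm:ℝ)^2 = t^2 * c^2 + 4⁻¹ := by
      have h0 := hdist_gen q 0 hqv
      rw [hM10, hzm, hxq2] at h0
      rw [h0]; norm_num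
    have hd2 : (zd:ℝ)^2 = (1-t)^2 * c^2 := by
      have e1 : p - q = (1-t) • (p - M1 - (2⁻¹:ℝ) • v) := by
        have e2 : p - q = (p - M1 - (2⁻¹:ℝ) • v) - (q - M1 - (2⁻¹:ℝ) • v) := by abel
        rw [e2, ht, sub_smul, one_smul]
      rw [← hzd, dist_eq_norm, e1, norm_smul, Real.norm_eq_abs, mul_pow, sq_abs, hc]
    have hdne : (zd:ℝ) ≠ 0 := by
      rw [← hzd]; exact dist_ne_zero.mpr hne
    have habs : c - t*c = (zd:ℝ) ∨ c - t*c = -(zd:ℝ) := by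
      have h0 : (c - t*c - zd) * (c - t*c + zd) = 0 := by linear_combination -hd2
      rcases mul_eq_zero.mp h0 with h | h
      · left; linarith
      · right; linarith
    obtain ⟨zd', hzd'ne, hzd'⟩ : ∃ z' : ℤ, (z':ℝ) ≠ 0 ∧ c - t*c = (z':ℝ) := by
      rcases habs with h | h
      · exact ⟨zd, hdne, h⟩
      · exact ⟨-zd, by push_cast; simpa using hdne, by push_cast; rw [h]⟩
    have h2c : 2*c = ((zk:ℝ)^2 + (zd':ℝ)^2 - (zm:ℝ)^2)/(zd':ℝ) := by
      have e1 : t*c = c - (zd':ℝ) := by linarith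
      have e2 : (zm:ℝ)^2 = (c - (zd':ℝ))^2 + 4⁻¹ := by
        rw [hm2, ← e1]; ring
      rw [eq_div_iff hzd'ne]
      linear_combination e2 - hk2
    exact aux_no_rat_sqrt zk (2*c) (((zk:ℚ)^2 + (zd':ℚ)^2 - (zm:ℚ)^2)/(zd':ℚ))
      (by rw [h2c]; push_cast; ring)
      (by linear_combination (-4:ℝ)*hk2)
  -- existence of an off-line point
  obtain ⟨A, hA, hAL⟩ : ∃ A ∈ M, A ∉ L := by
    by_contra hcon
    push_neg at hcon
    apply hnoncol
    rw [collinear_iff_of_mem (show M1 ∈ (M : Set (EuclideanSpace ℝ (Fin 2))) from hM1)]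
    refine ⟨v, fun p hp => ?_⟩
    obtain ⟨s, hs⟩ := (hmemL p).mp (hcon p hp)
    exact ⟨s, by rw [vadd_eq_add]; exact (sub_eq_iff_eq_add.mp hs)⟩
  have hAeq : dist A M1 = dist A M2 :=
    dichot A M1 M2 h12 hAL (hint A hA M1 hM1) (hint A hA M2 hM2)
  have hAv : inner ℝ (A - M1 - (2⁻¹:ℝ) • v) v = (0:ℝ) := hperp A hAeq
  obtain ⟨zk, hzk⟩ := hint A hA M1 hM1
  have hzk1 : 1 ≤ zk := by
    have h0 : (0:ℝ) < (zk:ℝ) := by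
      rw [← hzk]
      exact dist_pos.mpr (fun h => hAL (h ▸ hM1L))
    have : (0:ℤ) < zk := by exact_mod_cast h0
    omega
  have hkA : ‖A - M1 - (2⁻¹:ℝ) • v‖^2 = (zk:ℝ)^2 - 4⁻¹ := by
    have h0 := hdist_gen A 0 hAv
    rw [show M1 + (0:ℝ) • v = M1 by simp, hzk] at h0
    have e0 : ((2:ℝ)⁻¹ - 0)^2 = 4⁻¹ := by norm_num
    rw [e0] at h0
    linarith
  -- no unit distance from A to a line point of M
  have noUnitA : ∀ B ∈ M, B ∈ L → dist B A ≠ 1 := by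
    intro B hB hBL hd1
    obtain ⟨zs, hzs⟩ := honline B hB hBL
    have hBform : B = M1 + (zs:ℝ) • v := by rw [← hzs]; abel
    have h1 : dist B A ^ 2 = ‖A - M1 - (2⁻¹:ℝ) • v‖^2 + (2⁻¹ - (zs:ℝ))^2 := by
      rw [dist_comm, hBform]
      exact hdist_gen A zs hAv
    have hint1 : zk^2 + zs^2 - zs = 1 := by
      have h0 : (zk:ℝ)^2 + (zs:ℝ)^2 - (zs:ℝ) = 1 := by
        rw [hd1] at h1; rw [hkA] at h1; nlinarith [h1]
      exact_mod_cast h0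
    have hss : 0 ≤ zs^2 - zs := by nlinarith [sq_nonneg (2*zs - 1)]
    have hzk_eq : zk = 1 := by nlinarith [hint1, hss, hzk1]
    -- fourth point
    have h3 : ({M1, M2, A} : Finset (EuclideanSpace ℝ (Fin 2))).card ≤ 3 := by
      apply le_trans (Finset.card_insert_le _ _)
      have := Finset.card_insert_le M2 ({A} : Finset (EuclideanSpace ℝ (Fin 2)))
      simp only [Finset.card_singleton] at this ⊢
      omega
    have hne4 : (M \ {M1, M2, A}).Nonempty := by
      rw [← Finset.card_pos]
      have hle := Finset.card_le_card_sdiff_add_card (s := M)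
        (t := ({M1, M2, A} : Finset (EuclideanSpace ℝ (Fin 2))))
      omega
    obtain ⟨P, hP⟩ := hne4
    rw [Finset.mem_sdiff] at hP
    obtain ⟨hPM, hPnot⟩ := hP
    simp only [Finset.mem_insert, Finset.mem_singleton, not_or] at hPnot
    obtain ⟨hPM1, hPM2, hPA⟩ := hPnot
    have hPL : P ∈ L := by
      by_contra hPL'
      exact hPA (huniq P hPM hPL' A hA hAL)
    obtain ⟨zr, hzr⟩ := honline P hPM hPL
    have hPform : P = M1 + (zr:ℝ) • v := by rw [← hzr]; abel
    obtain ⟨ze, hze⟩ := hint P hPM A hA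
    have h2 : (ze:ℝ)^2 = ‖A - M1 - (2⁻¹:ℝ) • v‖^2 + (2⁻¹ - (zr:ℝ))^2 := by
      rw [← hze, dist_comm, hPform]
      exact hdist_gen A zr hAv
    have hint2 : zr^2 - zr + 1 = ze^2 := by
      have hzkr : (zk:ℝ) = 1 := by exact_mod_cast hzk_eq
      have h0 : (zr:ℝ)^2 - (zr:ℝ) + 1 = (ze:ℝ)^2 := by
        rw [hkA, hzkr] at h2; nlinarith [h2]
      exact_mod_cast h0
    rcases aux_sq_int zr ze hint2 with h | h
    · apply hPM1
      rw [hPform, h]; push_cast; simp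
    · apply hPM2
      rw [hPform, h]; push_cast
      rw [one_smul, hvdef]; abel
  -- specialized distance formula for A
  have hdA : ∀ s : ℝ, dist A (M1 + s • v) ^ 2
      = ‖A - M1 - (2⁻¹:ℝ) • v‖^2 + (2⁻¹ - s)^2 := fun s => hdist_gen A s hAv
  refine ⟨?_, A, hA, hAL, hAeq, fun p hp hpA => ?_⟩
  · intro p hp q hq hpq
    by_cases hpL : p ∈ L
    · by_cases hqL : q ∈ L
      · -- both on the line
        obtain ⟨s, hs⟩ := (hmemL p).mp hpL
        obtain ⟨t, ht⟩ := (hmemL q).mp hqL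
        have hst : (s - t)^2 = 1 := by
          have e1 : p - q = (s - t) • v := by rw [sub_smul, ← hs, ← ht]; abel
          have e2 : dist p q = |s - t| := by
            rw [dist_eq_norm, e1, norm_smul, Real.norm_eq_abs, hvn, mul_one]
          rw [e2] at hpq
          rw [← sq_abs, hpq]; norm_num
        have hAspan : A ∉ affineSpan ℝ ({p, q} : Set (EuclideanSpace ℝ (Fin 2))) := by
          intro hmem
          apply hAL
          have hsub : affineSpan ℝ ({p, q} : Set (EuclideanSpace ℝ (Fin 2))) ≤ L := by
            apply affineSpan_le.mpr
            intro x hx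
            rcases hx with h | h
            · rw [h]; exact hpL
            · rw [Set.mem_singleton_iff.mp h]; exact hqL
          exact hsub hmem
        have hAd : dist A p = dist A q :=
          dichot A p q hpq hAspan (hint A hA p hp) (hint A hA q hq)
        have hpf : p = M1 + s • v := by rw [← hs]; abel
        have hqf : q = M1 + t • v := by rw [← ht]; abel
        have e1 : dist A p ^ 2 = ‖A - M1 - (2⁻¹:ℝ) • v‖^2 + (2⁻¹ - s)^2 := by
          rw [hpf]; exact hdA s
        have e2 : dist A q ^ 2 = ‖A - M1 - (2⁻¹:ℝ) • v‖^2 + (2⁻¹ - t)^2 := by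
          rw [hqf]; exact hdA t
        have e3 : (2⁻¹ - s)^2 = (2⁻¹ - t)^2 := by
          rw [hAd] at e1; rw [e1] at e2; linarith
        have hst1 : s + t = 1 := by
          have h0 : (s - t) * (s + t - 1) = 0 := by linear_combination e3
          rcases mul_eq_zero.mp h0 with h | h
          · exfalso; rw [h] at hst; norm_num at hst
          · linarith
        have hcase : (s = 1 ∧ t = 0) ∨ (s = 0 ∧ t = 1) := by
          have h0 : (s - t - 1) * (s - t + 1) = 0 := by linear_combination hst
          rcases mul_eq_zero.mp h0 with h | h
          · left; constructor <;> linarith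
          · right; constructor <;> linarith
        rcases hcase with ⟨hs1, ht0⟩ | ⟨hs0, ht1⟩
        · have hpM2 : p = M2 := by
            rw [hpf, hs1, one_smul, hvdef]; abel
          have hqM1 : q = M1 := by
            rw [hqf, ht0, zero_smul, add_zero]
          rw [hpM2, hqM1]
          exact Set.pair_comm M2 M1
        · have hpM1 : p = M1 := by
            rw [hpf, hs0, zero_smul, add_zero]
          have hqM2 : q = M2 := by
            rw [hqf, ht1, one_smul, hvdef]; abel
          rw [hpM1, hqM2]
      · -- q off the line
        have hqA : q = A := huniq q hq hqL A hA hAL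
        exact absurd (hqA ▸ hpq) (noUnitA p hp hpL)
    · have hpA : p = A := huniq p hp hpL A hA hAL
      by_cases hqL : q ∈ L
      · exfalso
        apply noUnitA q hq hqL
        rw [dist_comm, ← hpA]
        exact hpq
      · have hqA : q = A := huniq q hq hqL A hA hAL
        exfalso
        rw [hpA, hqA, dist_self] at hpq
        norm_num at hpq
  · by_contra hpL
    exact hpA (huniq p hp hpL A hA hAL)
end

section
/- For arbitrary integers m ≥ 2, n ≥ m+1, and d ≥ 1, there exists an integral point set M of n points in m-dimensional Euclidean space (that is, M spans ℝ^m and all pairwise distances are integers) containing two points M₁, M₂ with |M₁M₂| = d. -/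
namespace IPSaux

/-! ### Number-theoretic part -/

def Anum (k t : ℕ) : ℤ := 2 + 3^t*(3^k+2) - 3^(k-t)
def Bnum (k t : ℕ) : ℤ := 3^(k-t) + 3^t*(3^k+2)

lemma pow3_mod4 (a : ℕ) : ((3:ZMod 4))^a = 1 ∨ ((3:ZMod 4))^a = 3 := by
  induction a with
  | zero => left; rfl
  | succ b ih => rcases ih with h | h <;> rw [pow_succ, h] <;> [right; left] <;> decide

lemma h4A (k t : ℕ) (ht : t ≤ k) : (4:ℤ) ∣ Anum k t := by
  have h := (ZMod.intCast_zmod_eq_zero_iff_dvd (Anum k t) 4).mp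
  have h4 : ((4:ℕ):ℤ) = (4:ℤ) := by norm_num
  rw [h4] at h
  apply h
  obtain ⟨b, rfl⟩ : ∃ b, k = b + t := ⟨k - t, by omega⟩
  unfold Anum
  push_cast
  simp only [Nat.add_sub_cancel, pow_add]
  rcases pow3_mod4 t with h1 | h1 <;> rcases pow3_mod4 b with h2 | h2 <;>
    rw [h1, h2] <;> decide

lemma h4B (k t : ℕ) (ht : t ≤ k) : (4:ℤ) ∣ Bnum k t := by
  have h := (ZMod.intCast_zmod_eq_zero_iff_dvd (Bnum k t) 4).mp
  have h4 : ((4:ℕ):ℤ) = (4:ℤ) := by norm_num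
  rw [h4] at h
  apply h
  obtain ⟨b, rfl⟩ : ∃ b, k = b + t := ⟨k - t, by omega⟩
  unfold Bnum
  push_cast
  simp only [Nat.add_sub_cancel, pow_add]
  rcases pow3_mod4 t with h1 | h1 <;> rcases pow3_mod4 b with h2 | h2 <;>
    rw [h1, h2] <;> decide

def Xv (k t : ℕ) : ℤ := Anum k t / 4
def Sv (k t : ℕ) : ℤ := Bnum k t / 4
def s0v (k : ℕ) : ℤ := (3^k + 1) / 2
def Cz (k : ℕ) : ℤ := 3^k * (3^k + 2)

lemma Xv_eq (k t : ℕ) (ht : t ≤ k) : 4 * Xv k t = Anum k t :=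
  Int.mul_ediv_cancel' (h4A k t ht)
lemma Sv_eq (k t : ℕ) (ht : t ≤ k) : 4 * Sv k t = Bnum k t :=
  Int.mul_ediv_cancel' (h4B k t ht)
lemma s0v_eq (k : ℕ) : 2 * s0v k = 3^k + 1 := by
  apply Int.mul_ediv_cancel'
  have : Odd ((3:ℤ)^k) := Odd.pow (by decide)
  obtain ⟨c, hc⟩ := this
  exact ⟨c+1, by omega⟩

lemma prod_eq (k t : ℕ) (ht : t ≤ k) : (3:ℤ)^(k-t) * (3^t*(3^k+2)) = Cz k := by
  unfold Cz
  rw [show k = (k-t) + t by omega]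
  ring_nf
  rw [show k - t + t = k by omega]
  ring

lemma Xv_zero (k : ℕ) : Xv k 0 = 1 := by
  have h : Anum k 0 = 4 := by
    unfold Anum
    simp only [pow_zero, Nat.sub_zero, one_mul]
    omega
  unfold Xv
  rw [h]
  norm_num

lemma Xv_strictMonoOn (k : ℕ) {s t : ℕ} (hst : s < t) (ht : t ≤ k) : Xv k s < Xv k t := by
  have h1 : Anum k s < Anum k t := by
    unfold Anum
    have e1 : (3:ℤ)^s * (3^k+2) < 3^t * (3^k+2) := by
      apply mul_lt_mul_of_pos_right (pow_lt_pow_right₀ (by norm_num) hst) (by positivity)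
    have e2 : (3:ℤ)^(k-t) ≤ 3^(k-s) := pow_le_pow_right₀ (by norm_num) (by omega)
    omega
  have := Xv_eq k s (le_trans (le_of_lt hst) ht)
  have := Xv_eq k t ht
  omega

lemma Xv_pos (k t : ℕ) (ht : t ≤ k) : 1 ≤ Xv k t := by
  have h := Xv_eq k t ht
  have : (4:ℤ) ≤ Anum k t := by
    unfold Anum
    have e1 : (3:ℤ)^(k-t) + 2 ≤ 3^t * (3^k+2) := by
      have : (3:ℤ)^(k-t) ≤ 3^k := pow_le_pow_right₀ (by norm_num) (by omega)
      have : (1:ℤ) ≤ 3^t := one_le_pow₀ (by norm_num)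
      nlinarith [pow_pos (show (0:ℤ) < 3 by norm_num) k]
    omega
  omega

lemma Sv_pos (k t : ℕ) (ht : t ≤ k) : 1 ≤ Sv k t := by
  have h := Sv_eq k t ht
  have : (4:ℤ) ≤ Bnum k t := by
    unfold Bnum
    have : (1:ℤ) ≤ 3^(k-t) := one_le_pow₀ (by norm_num)
    have : (3:ℤ) ≤ 3^t * (3^k+2) := by
      have : (1:ℤ) ≤ 3^t := one_le_pow₀ (by norm_num)
      have : (1:ℤ) ≤ 3^k := one_le_pow₀ (by norm_num)
      nlinarith
    omega
  omega

lemma s0v_pos (k : ℕ) : 1 ≤ s0v k := by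
  have h := s0v_eq k
  have : (1:ℤ) ≤ 3^k := one_le_pow₀ (by norm_num)
  omega

lemma Cz_ge (k : ℕ) : 3 ≤ Cz k := by
  unfold Cz
  have : (1:ℤ) ≤ 3^k := one_le_pow₀ (by norm_num)
  nlinarith

lemma line_sphere_identity (k t : ℕ) (ht : t ≤ k) :
    ((Xv k t : ℝ) - 1/2)^2 + (Cz k : ℝ)/4 = (Sv k t : ℝ)^2 := by
  have hX : (4:ℝ) * (Xv k t : ℝ) = 2 + 3^t*(3^k+2) - 3^(k-t) := by
    have := Xv_eq k t ht
    have : ((4 * Xv k t : ℤ) : ℝ) = ((Anum k t : ℤ) : ℝ) := by rw [this]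
    push_cast [Anum] at this
    linarith
  have hS : (4:ℝ) * (Sv k t : ℝ) = 3^(k-t) + 3^t*(3^k+2) := by
    have := Sv_eq k t ht
    have : ((4 * Sv k t : ℤ) : ℝ) = ((Bnum k t : ℤ) : ℝ) := by rw [this]
    push_cast [Bnum] at this
    linarith
  have hC : (Cz k : ℝ) = 3^(k-t) * (3^t*(3^k+2)) := by
    have := prod_eq k t ht
    have : (((3:ℤ)^(k-t) * (3^t*(3^k+2)) : ℤ) : ℝ) = ((Cz k : ℤ) : ℝ) := by rw [this]
    push_cast at this
    linarith
  linear_combination ((4*(Xv k t : ℝ) - 2 + ((3:ℝ)^t*(3^k+2) - 3^(k-t)))/16) * hX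
    + (1/4)*hC - ((4*(Sv k t : ℝ) + (3:ℝ)^(k-t) + 3^t*(3^k+2))/16)*hS

lemma origin_sphere_identity (k : ℕ) :
    ((0:ℝ) - 1/2)^2 + (Cz k : ℝ)/4 = (s0v k : ℝ)^2 := by
  have hs : (2:ℝ) * (s0v k : ℝ) = 3^k + 1 := by
    have := s0v_eq k
    have : ((2 * s0v k : ℤ) : ℝ) = (((3:ℤ)^k + 1 : ℤ) : ℝ) := by rw [this]
    push_cast at this
    linarith
  have hC : (Cz k : ℝ) = 3^k * (3^k+2) := by unfold Cz; push_cast; ring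
  linear_combination (1/4)*hC - ((2*(s0v k : ℝ) + 3^k + 1)/4)*hs

/-! combined line coordinates (index 0 = origin) -/

def Xz (k q : ℕ) : ℤ := if q = 0 then 0 else Xv k (q-1)
def Szq (k q : ℕ) : ℤ := if q = 0 then s0v k else Sv k (q-1)

lemma Xz_zero (k : ℕ) : Xz k 0 = 0 := rfl
lemma Xz_one (k : ℕ) : Xz k 1 = 1 := by simp [Xz, Xv_zero]

lemma Xz_mono (k : ℕ) {q q' : ℕ} (h : q < q') (h' : q' - 1 ≤ k) : Xz k q < Xz k q' := by
  unfold Xz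
  rcases Nat.eq_zero_or_pos q with rfl | hq
  · rw [if_pos rfl, if_neg (by omega : ¬ q' = 0)]
    exact lt_of_lt_of_le one_pos (Xv_pos k (q'-1) h')
  · rw [if_neg (by omega), if_neg (by omega)]
    exact Xv_strictMonoOn k (by omega) h'

lemma Xz_nonneg (k q : ℕ) (h : q - 1 ≤ k) : 0 ≤ Xz k q := by
  unfold Xz
  rcases Nat.eq_zero_or_pos q with rfl | hq
  · simp
  · rw [if_neg (by omega)]
    have := Xv_pos k (q-1) h
    omega

lemma Szq_pos (k q : ℕ) (h : q - 1 ≤ k) : 1 ≤ Szq k q := by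
  unfold Szq
  rcases Nat.eq_zero_or_pos q with rfl | hq
  · simpa using s0v_pos k
  · rw [if_neg (by omega)]
    exact Sv_pos k (q-1) h

lemma Xz_identity (k q : ℕ) (h : q - 1 ≤ k) :
    ((Xz k q : ℝ) - 1/2)^2 + (Cz k : ℝ)/4 = (Szq k q : ℝ)^2 := by
  unfold Xz Szq
  rcases Nat.eq_zero_or_pos q with rfl | hq
  · simpa using origin_sphere_identity k
  · rw [if_neg (by omega), if_neg (by omega)]
    exact line_sphere_identity k (q-1) h

/-! ### Geometric constants -/

noncomputable def ah : ℝ := Real.sqrt 2 / 2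
noncomputable def br (K C : ℝ) : ℝ := (Real.sqrt (2 + K * (C - 2)) - Real.sqrt 2) / (2 * K)

lemma ah_pos : 0 < ah := by unfold ah; positivity

lemma ah_sq : ah ^ 2 = 1 / 2 := by
  unfold ah
  rw [div_pow, Real.sq_sqrt (by norm_num : (2:ℝ) ≥ 0)]
  norm_num

lemma two_ah : 2 * ah = Real.sqrt 2 := by unfold ah; ring

lemma br_nonneg {K C : ℝ} (hK : 1 ≤ K) (hC : 2 ≤ C) : 0 ≤ br K C := by
  unfold br
  apply div_nonneg _ (by linarith)
  have : Real.sqrt 2 ≤ Real.sqrt (2 + K * (C - 2)) := by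
    apply Real.sqrt_le_sqrt
    nlinarith
  linarith

lemma br_quad {K C : ℝ} (hK : 1 ≤ K) (hC : 2 ≤ C) :
    K * br K C ^ 2 + Real.sqrt 2 * br K C + 1 / 2 = C / 4 := by
  have hD : (0:ℝ) ≤ 2 + K * (C - 2) := by nlinarith
  have h1 : Real.sqrt (2 + K * (C - 2)) ^ 2 = 2 + K * (C - 2) := Real.sq_sqrt hD
  have h2 : Real.sqrt 2 ^ 2 = 2 := Real.sq_sqrt (by norm_num)
  have hK0 : K ≠ 0 := by linarith
  unfold br
  set S := Real.sqrt (2 + K * (C - 2)) with hS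
  field_simp
  nlinarith [h1, h2, sq_nonneg (S - Real.sqrt 2), sq_nonneg (S + Real.sqrt 2)]

lemma sphere_norm {K C : ℝ} (hK : 1 ≤ K) (hC : 2 ≤ C) :
    (ah + br K C) ^ 2 + (K - 1) * br K C ^ 2 = C / 4 := by
  have hq := br_quad hK hC
  have h2 := ah_sq
  have h3 := two_ah
  linear_combination hq + h2 + (br K C) * h3

/-! ### Points -/

variable (m : ℕ) [NeZero m]

noncomputable def lpt (x : ℝ) : EuclideanSpace ℝ (Fin m) :=
  WithLp.toLp 2 (fun i => if i = 0 then x else 0)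

noncomputable def sp (e C : ℝ) (j : Fin m) : EuclideanSpace ℝ (Fin m) :=
  WithLp.toLp 2 (fun i => if i = 0 then e/2
    else if i = j then e * (ah + br ((m-1 : ℕ) : ℝ) C) else e * br ((m-1 : ℕ) : ℝ) C)

/-! sum helpers -/

lemma sum_shape0 (A : ℝ) : ∑ i : Fin m, (if i = (0:Fin m) then A else 0) = A := by
  simp

lemma sum_shape1 (j : Fin m) (hj : j ≠ 0) (A B Cc : ℝ) :
    ∑ i : Fin m, (if i = 0 then A else if i = j then B else Cc)
      = A + (B + ((m-2 : ℕ) : ℝ) * Cc) := by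
  rw [← Finset.add_sum_erase _ _ (Finset.mem_univ (0 : Fin m))]
  simp only [if_pos rfl]
  congr 1
  have hjmem : j ∈ Finset.univ.erase (0 : Fin m) := Finset.mem_erase.mpr ⟨hj, Finset.mem_univ j⟩
  rw [← Finset.add_sum_erase _ _ hjmem]
  rw [if_neg hj, if_pos rfl]
  congr 1
  have : ∀ i ∈ (Finset.univ.erase (0:Fin m)).erase j,
      (if i = 0 then A else if i = j then B else Cc) = Cc := by
    intro i hi
    rw [Finset.mem_erase, Finset.mem_erase] at hi
    rw [if_neg hi.2.1, if_neg hi.1]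
  rw [Finset.sum_congr rfl this, Finset.sum_const]
  have hcard : ((Finset.univ.erase (0:Fin m)).erase j).card = m - 2 := by
    rw [Finset.card_erase_of_mem hjmem, Finset.card_erase_of_mem (Finset.mem_univ _)]
    simp only [Finset.card_univ, Fintype.card_fin]
    omega
  rw [hcard]
  simp [mul_comm]

lemma sum_shape2 (j j' : Fin m) (hjj' : j ≠ j') (B B' : ℝ) :
    ∑ i : Fin m, (if i = j then B else if i = j' then B' else 0) = B + B' := by
  rw [← Finset.add_sum_erase _ _ (Finset.mem_univ j)]
  rw [if_pos rfl]
  congr 1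
  have hmem : j' ∈ Finset.univ.erase j := Finset.mem_erase.mpr ⟨(Ne.symm hjj'), Finset.mem_univ _⟩
  rw [← Finset.add_sum_erase _ _ hmem]
  rw [if_neg (Ne.symm hjj'), if_pos rfl]
  have : ∀ i ∈ (Finset.univ.erase j).erase j',
      (if i = j then B else if i = j' then B' else 0) = 0 := by
    intro i hi
    rw [Finset.mem_erase, Finset.mem_erase] at hi
    rw [if_neg hi.2.1, if_neg hi.1]
  rw [Finset.sum_congr rfl this, Finset.sum_const, smul_zero, add_zero]

/-! distance computations -/

lemma dist_lpt_lpt (x y : ℝ) : dist (lpt m x) (lpt m y) = |x - y| := by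
  rw [EuclideanSpace.dist_eq]
  have : ∀ i : Fin m, dist (lpt m x i) (lpt m y i) ^ 2
      = (if i = (0:Fin m) then (x-y)^2 else 0) := by
    intro i
    by_cases h : i = 0 <;> simp [lpt, h, Real.dist_eq, sq_abs]
  rw [Finset.sum_congr rfl (fun i _ => this i), sum_shape0]
  exact Real.sqrt_sq_eq_abs _

lemma dist_lpt_sp (hm : 2 ≤ m) (e C : ℝ) (he : 0 ≤ e) (hC : 2 ≤ C)
    (x S : ℝ) (hS : 0 ≤ S)
    (hid : (x - e/2)^2 + e^2 * (C/4) = (e*S)^2) (j : Fin m) (hj : j ≠ 0) :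
    dist (lpt m x) (sp m e C j) = e * S := by
  have hK : (1:ℝ) ≤ ((m-1 : ℕ) : ℝ) := by
    have : 1 ≤ m - 1 := by omega
    exact_mod_cast this
  rw [EuclideanSpace.dist_eq]
  have hterm : ∀ i : Fin m, dist (lpt m x i) (sp m e C j i) ^ 2
      = (if i = (0:Fin m) then (x - e/2)^2
         else if i = j then (e * (ah + br ((m-1:ℕ):ℝ) C))^2
         else (e * br ((m-1:ℕ):ℝ) C)^2) := by
    intro i
    by_cases h0 : i = 0
    · simp [lpt, sp, h0, Real.dist_eq, sq_abs]
    · by_cases hij : i = j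
      · simp [lpt, sp, h0, hij, Real.dist_eq, sq_abs, if_neg hj, mul_pow]
      · simp [lpt, sp, h0, hij, Real.dist_eq, sq_abs, mul_pow]
  rw [Finset.sum_congr rfl (fun i _ => hterm i), sum_shape1 m j hj]
  have hnorm : (e * (ah + br ((m-1:ℕ):ℝ) C))^2 + ((m-2:ℕ):ℝ) * (e * br ((m-1:ℕ):ℝ) C)^2
      = e^2 * (C/4) := by
    have hsn := sphere_norm (K := ((m-1:ℕ):ℝ)) (C := C) hK hC
    have hm2 : ((m-2:ℕ):ℝ) = ((m-1:ℕ):ℝ) - 1 := by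
      have : (m - 2) + 1 = m - 1 := by omega
      have := congrArg (fun t : ℕ => (t:ℝ)) this
      push_cast at this
      linarith
    rw [hm2]
    nlinarith [hsn]
  rw [show (x - e/2)^2 + ((e * (ah + br ((m-1:ℕ):ℝ) C))^2
      + ((m-2:ℕ):ℝ) * (e * br ((m-1:ℕ):ℝ) C)^2)
      = (x - e/2)^2 + e^2 * (C/4) by rw [← hnorm]]
  rw [hid]
  exact Real.sqrt_sq (by positivity)

lemma dist_sp_sp (e C : ℝ) (he : 0 ≤ e) (j j' : Fin m)
    (hj : j ≠ 0) (hj' : j' ≠ 0) (hjj' : j ≠ j') :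
    dist (sp m e C j) (sp m e C j') = e := by
  rw [EuclideanSpace.dist_eq]
  have hterm : ∀ i : Fin m, dist (sp m e C j i) (sp m e C j' i) ^ 2
      = (if i = j then (e*ah)^2 else if i = j' then (e*ah)^2 else 0) := by
    intro i
    rw [Real.dist_eq, sq_abs]
    by_cases h0 : i = 0 <;> by_cases hij : i = j <;> by_cases hij' : i = j' <;>
      simp_all [sp] <;> ring
  rw [Finset.sum_congr rfl (fun i _ => hterm i), sum_shape2 m j j' hjj']
  have : (e*ah)^2 + (e*ah)^2 = e^2 := by
    have := ah_sq
    nlinarith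
  rw [this]
  exact Real.sqrt_sq he

end IPSaux

lemma IPSaux.sum_erase_eval (m : ℕ) [NeZero m] (i : Fin m) (hi : i ≠ 0) (P Q : ℝ) :
    ∑ j ∈ Finset.univ.erase (0:Fin m), (if i = j then P else Q)
      = P + ((m-2 : ℕ) : ℝ) * Q := by
  have himem : i ∈ Finset.univ.erase (0:Fin m) := Finset.mem_erase.mpr ⟨hi, Finset.mem_univ _⟩
  rw [← Finset.add_sum_erase _ _ himem, if_pos rfl]
  congr 1
  have h : ∀ x ∈ (Finset.univ.erase (0:Fin m)).erase i,
      (if i = x then P else Q) = Q := by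
    intro x hx
    rw [Finset.mem_erase, Finset.mem_erase] at hx
    rw [if_neg (Ne.symm hx.1)]
  rw [Finset.sum_congr rfl h, Finset.sum_const]
  have hcard : ((Finset.univ.erase (0:Fin m)).erase i).card = m - 2 := by
    rw [Finset.card_erase_of_mem himem, Finset.card_erase_of_mem (Finset.mem_univ _)]
    simp only [Finset.card_univ, Fintype.card_fin]
    omega
  rw [hcard]
  simp [mul_comm]



open IPSaux in
/-- For all integers m ≥ 2, n ≥ m + 1, d ≥ 1 there exists an integral point set
of n points in ℝ^m (spanning ℝ^m, all pairwise distances integers) containing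
two points at distance exactly d. -/
theorem exists_integral_point_set_with_distance (m n d : ℕ)
    (hm : 2 ≤ m) (hn : m + 1 ≤ n) (hd : 1 ≤ d) :
    ∃ M : Finset (EuclideanSpace ℝ (Fin m)),
      M.card = n ∧
      affineSpan ℝ (M : Set (EuclideanSpace ℝ (Fin m))) = ⊤ ∧
      (∀ p ∈ M, ∀ q ∈ M, ∃ z : ℤ, dist p q = (z : ℝ)) ∧
      (∃ p ∈ M, ∃ q ∈ M, dist p q = (d : ℝ)) := by
  classical
  haveI : NeZero m := ⟨by omega⟩
  set k := n with hk
  set N := n - m + 1 with hNdef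
  have hN2 : 2 ≤ N := by omega
  have hqk : ∀ q, q < N → q - 1 ≤ k := by intro q hq; omega
  set e : ℝ := (d : ℝ) with he'
  have he : 0 < e := by
    rw [he']
    exact_mod_cast hd
  set C : ℝ := (Cz k : ℝ) with hC'
  have hC : 2 ≤ C := by
    rw [hC']
    have := Cz_ge k
    exact_mod_cast (by omega : (2:ℤ) ≤ Cz k)
  set K : ℝ := ((m-1 : ℕ) : ℝ) with hK'
  have hK : 1 ≤ K := by
    rw [hK']
    exact_mod_cast (by omega : 1 ≤ m - 1)
  have hm2cast : ((m-2 : ℕ) : ℝ) = K - 1 := by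
    rw [hK']
    have h : (m - 2) + 1 = m - 1 := by omega
    have := congrArg (fun t : ℕ => (t:ℝ)) h
    push_cast at this
    linarith
  set L : ℕ → EuclideanSpace ℝ (Fin m) := fun q => lpt m (e * (Xz k q : ℝ)) with hL
  set SP : Fin m → EuclideanSpace ℝ (Fin m) := fun j => sp m e C j with hSP
  set M : Finset (EuclideanSpace ℝ (Fin m)) :=
    (Finset.range N).image L ∪ ((Finset.univ : Finset (Fin m)).erase 0).image SP with hM
  -- basic evaluations
  have hLev : ∀ q (i : Fin m), L q i = if i = 0 then e * (Xz k q : ℝ) else 0 := by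
    intro q i; rfl
  have hSPev : ∀ (j i : Fin m), SP j i
      = if i = 0 then e/2 else if i = j then e * (ah + br K C) else e * br K C := by
    intro j i; rfl
  -- injectivity of L below N
  have hXzinj : ∀ q q', q < N → q' < N → Xz k q = Xz k q' → q = q' := by
    intro q q' hq hq' heq
    rcases lt_trichotomy q q' with h | h | h
    · exact absurd heq (ne_of_lt (Xz_mono k h (hqk q' hq')))
    · exact h
    · exact absurd heq.symm (ne_of_lt (Xz_mono k h (hqk q hq)))
  have hLinj : ∀ q q', q < N → q' < N → L q = L q' → q = q' := by
    intro q q' hq hq' heq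
    have h0 : L q 0 = L q' 0 := by rw [heq]
    rw [hLev, hLev, if_pos rfl, if_pos rfl] at h0
    have : (Xz k q : ℝ) = (Xz k q' : ℝ) := mul_left_cancel₀ (ne_of_gt he) h0
    exact hXzinj q q' hq hq' (by exact_mod_cast this)
  -- L and SP are never equal
  have hLSP : ∀ q (j : Fin m), q < N → j ≠ 0 → L q ≠ SP j := by
    intro q j hq hj heq
    have h0 : L q 0 = SP j 0 := by rw [heq]
    rw [hLev, hSPev, if_pos rfl, if_pos rfl] at h0
    have h1 : (Xz k q : ℝ) = 1/2 := by
      field_simp at h0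
      nlinarith [h0, he]
    have h2 : (2 * Xz k q : ℤ) = 1 := by
      have : ((2 * Xz k q : ℤ) : ℝ) = ((1:ℤ) : ℝ) := by push_cast; linarith
      exact_mod_cast this
    omega
  have hSPinj : ∀ j j' : Fin m, j ≠ 0 → j' ≠ 0 → SP j = SP j' → j = j' := by
    intro j j' hj hj' heq
    by_contra hne
    have h0 : SP j j = SP j' j := by rw [heq]
    rw [hSPev, hSPev, if_neg hj, if_pos rfl, if_neg hj, if_neg hne] at h0
    have : e * ah = 0 := by linarith
    have := ah_pos
    nlinarith [he]
  -- membership knowledge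
  have hmemL : ∀ q, q < N → L q ∈ M := by
    intro q hq
    rw [hM]
    exact Finset.mem_union_left _ (Finset.mem_image.mpr ⟨q, Finset.mem_range.mpr hq, rfl⟩)
  have hmemSP : ∀ j : Fin m, j ≠ 0 → SP j ∈ M := by
    intro j hj
    rw [hM]
    exact Finset.mem_union_right _ (Finset.mem_image.mpr
      ⟨j, Finset.mem_erase.mpr ⟨hj, Finset.mem_univ _⟩, rfl⟩)
  -- distance facts
  have hdLL : ∀ q q', dist (L q) (L q') = e * |(Xz k q - Xz k q' : ℤ)| := by
    intro q q'
    rw [hL]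
    simp only []
    rw [dist_lpt_lpt]
    rw [← mul_sub, abs_mul, abs_of_nonneg he.le]
    congr 1
    push_cast
    ring_nf
  have hdLS : ∀ q (j : Fin m), q < N → j ≠ 0 →
      dist (L q) (SP j) = e * (Szq k q : ℝ) := by
    intro q j hq hj
    have hid0 := Xz_identity k q (hqk q hq)
    have hSpos : (0:ℝ) ≤ (Szq k q : ℝ) := by
      have := Szq_pos k q (hqk q hq)
      exact_mod_cast (by omega : (0:ℤ) ≤ Szq k q)
    rw [hL, hSP]
    simp only []
    apply dist_lpt_sp m hm e C he.le hC _ _ hSpos _ _ hj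
    rw [hC'] at *
    linear_combination (e^2) * hid0
  have hdSS : ∀ j j' : Fin m, j ≠ 0 → j' ≠ 0 → j ≠ j' →
      dist (SP j) (SP j') = e := by
    intro j j' hj hj' hjj'
    rw [hSP]
    simp only []
    exact dist_sp_sp m e C he.le j j' hj hj' hjj'
  refine ⟨M, ?_, ?_, ?_, ?_⟩
  · -- cardinality
    have hdisj : Disjoint ((Finset.range N).image L)
        (((Finset.univ : Finset (Fin m)).erase 0).image SP) := by
      rw [Finset.disjoint_left]
      intro x hx1 hx2
      obtain ⟨q, hq, rfl⟩ := Finset.mem_image.mp hx1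
      obtain ⟨j, hjmem, hjq⟩ := Finset.mem_image.mp hx2
      rw [Finset.mem_erase] at hjmem
      exact hLSP q j (Finset.mem_range.mp hq) hjmem.1 hjq.symm
    rw [hM, Finset.card_union_of_disjoint hdisj]
    rw [Finset.card_image_of_injOn (fun q hq q' hq' =>
      hLinj q q' (Finset.mem_range.mp hq) (Finset.mem_range.mp hq'))]
    rw [Finset.card_image_of_injOn (fun j hj j' hj' =>
      hSPinj j j' (Finset.mem_erase.mp hj).1 (Finset.mem_erase.mp hj').1)]
    rw [Finset.card_range, Finset.card_erase_of_mem (Finset.mem_univ _)]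
    simp only [Finset.card_univ, Fintype.card_fin]
    omega
  · -- spanning
    have hL0 : L 0 = 0 := by
      ext i
      rw [hLev]
      simp [Xz_zero]
    have hmem0 : (0 : EuclideanSpace ℝ (Fin m)) ∈ (M : Set (EuclideanSpace ℝ (Fin m))) := by
      rw [← hL0]
      exact_mod_cast hmemL 0 (by omega)
    set G := vectorSpan ℝ (M : Set (EuclideanSpace ℝ (Fin m))) with hG
    have hmemG : ∀ p ∈ M, p ∈ G := by
      intro p hp
      have := vsub_mem_vectorSpan ℝ (Finset.mem_coe.mpr hp) hmem0
      simpa [vsub_eq_sub] using this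
    have hbr0 : 0 ≤ br K C := br_nonneg hK hC
    have hah := ah_pos
    -- single 0 1 ∈ G
    have hsingle0eq : EuclideanSpace.single (0 : Fin m) (1:ℝ) = e⁻¹ • L 1 := by
      ext i
      rw [EuclideanSpace.single_apply]
      have : (e⁻¹ • L 1) i = e⁻¹ * L 1 i := rfl
      rw [this, hLev]
      by_cases h : i = 0
      · rw [if_pos h, if_pos h, Xz_one]
        push_cast
        field_simp
      · rw [if_neg h, if_neg h, mul_zero]
    have hs0 : EuclideanSpace.single (0 : Fin m) (1:ℝ) ∈ G := by
      rw [hsingle0eq]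
      exact Submodule.smul_mem _ _ (hmemG _ (hmemL 1 (by omega)))
    -- the "all ones off axis" vector
    set ONE : EuclideanSpace ℝ (Fin m) := WithLp.toLp 2 (fun i => if i = 0 then 0 else 1) with hONE
    have hssumG : (∑ j ∈ Finset.univ.erase (0:Fin m), SP j) ∈ G :=
      Submodule.sum_mem _ (fun j hj => hmemG _ (hmemSP j (Finset.mem_erase.mp hj).1))
    have hssum_ev : ∀ i : Fin m, (∑ j ∈ Finset.univ.erase (0:Fin m), SP j) i
        = if i = 0 then ((m-1:ℕ):ℝ) * (e/2)
          else e * (ah + br K C) + ((m-2:ℕ):ℝ) * (e * br K C) := by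
      intro i
      have happ : (∑ j ∈ Finset.univ.erase (0:Fin m), SP j) i
          = ∑ j ∈ Finset.univ.erase (0:Fin m), SP j i := by
        rw [WithLp.ofLp_sum]
        exact Finset.sum_apply i _ _
      rw [happ]
      by_cases h : i = 0
      · rw [if_pos h]
        have : ∀ j ∈ Finset.univ.erase (0:Fin m), SP j i = e/2 := by
          intro j hj
          rw [hSPev, if_pos h]
        rw [Finset.sum_congr rfl this, Finset.sum_const]
        rw [Finset.card_erase_of_mem (Finset.mem_univ _)]
        simp only [Finset.card_univ, Fintype.card_fin, nsmul_eq_mul]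
      · rw [if_neg h]
        have : ∀ j ∈ Finset.univ.erase (0:Fin m), SP j i
            = (if i = j then e * (ah + br K C) else e * br K C) := by
          intro j hj
          rw [hSPev, if_neg h]
        rw [Finset.sum_congr rfl this, sum_erase_eval m i h]
    have hcoef : 0 < e * ah + K * (e * br K C) := by
      have h1 : 0 < e * ah := by positivity
      nlinarith [mul_nonneg (mul_nonneg (le_of_lt he) hbr0) (by linarith : (0:ℝ) ≤ K)]
    have hONEeq : ONE = (e * ah + K * (e * br K C))⁻¹ •
        ((∑ j ∈ Finset.univ.erase (0:Fin m), SP j)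
          - (((m-1:ℕ):ℝ) * (e/2)) • EuclideanSpace.single (0 : Fin m) (1:ℝ)) := by
      ext i
      have hs : ((e * ah + K * (e * br K C))⁻¹ •
          ((∑ j ∈ Finset.univ.erase (0:Fin m), SP j)
            - (((m-1:ℕ):ℝ) * (e/2)) • EuclideanSpace.single (0 : Fin m) (1:ℝ))) i
          = (e * ah + K * (e * br K C))⁻¹ *
            ((∑ j ∈ Finset.univ.erase (0:Fin m), SP j) i
              - ((m-1:ℕ):ℝ) * (e/2) * (EuclideanSpace.single (0 : Fin m) (1:ℝ)) i) := rfl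
      have hONEev : ∀ i : Fin m, ONE i = if i = 0 then (0:ℝ) else 1 := fun _ => rfl
      rw [hs, hssum_ev, EuclideanSpace.single_apply, hONEev]
      by_cases h : i = 0
      · rw [if_pos h, if_pos h, if_pos h]
        ring
      · rw [if_neg h, if_neg h, if_neg h]
        rw [hm2cast]
        have hcne : e * ah + K * (e * br K C) ≠ 0 := ne_of_gt hcoef
        field_simp
        ring
    have hONEG : ONE ∈ G := by
      rw [hONEeq]
      exact Submodule.smul_mem _ _ (Submodule.sub_mem _ hssumG (Submodule.smul_mem _ _ hs0))
    -- singles j ∈ G for j ≠ 0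
    have hsingles : ∀ j : Fin m, j ≠ 0 → EuclideanSpace.single j (1:ℝ) ∈ G := by
      intro j hj
      have heq : EuclideanSpace.single j (1:ℝ) = (e * ah)⁻¹ •
          (SP j - (e/2) • EuclideanSpace.single (0 : Fin m) (1:ℝ) - (e * br K C) • ONE) := by
        ext i
        have hs : ((e * ah)⁻¹ •
            (SP j - (e/2) • EuclideanSpace.single (0 : Fin m) (1:ℝ) - (e * br K C) • ONE)) i
            = (e * ah)⁻¹ * (SP j i - (e/2) * (EuclideanSpace.single (0 : Fin m) (1:ℝ)) i
              - (e * br K C) * ONE i) := rfl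
        have hONEev : ∀ i : Fin m, ONE i = if i = 0 then (0:ℝ) else 1 := fun _ => rfl
        rw [hs, hSPev, EuclideanSpace.single_apply, EuclideanSpace.single_apply, hONEev]
        have hahne : e * ah ≠ 0 := by positivity
        by_cases h : i = 0
        · rw [if_pos h, if_pos h, if_pos h, if_neg (by rw [h]; exact Ne.symm hj)]
          ring
        · rw [if_neg h, if_neg h, if_neg h]
          by_cases hij : i = j
          · rw [if_pos hij, if_pos hij]
            field_simp
            ring
          · rw [if_neg hij, if_neg hij]
            field_simp
            ring
      rw [heq]
      exact Submodule.smul_mem _ _ (Submodule.sub_mem _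
        (Submodule.sub_mem _ (hmemG _ (hmemSP j hj)) (Submodule.smul_mem _ _ hs0))
        (Submodule.smul_mem _ _ hONEG))
    have hGtop : G = ⊤ := by
      rw [eq_top_iff]
      rw [← (EuclideanSpace.basisFun (Fin m) ℝ).toBasis.span_eq]
      apply Submodule.span_le.mpr
      rintro x ⟨i, rfl⟩
      rw [OrthonormalBasis.coe_toBasis, EuclideanSpace.basisFun_apply]
      by_cases h : i = 0
      · rw [h]; exact hs0
      · exact hsingles i h
    have hne : (M : Set (EuclideanSpace ℝ (Fin m))).Nonempty := ⟨0, hmem0⟩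
    exact (AffineSubspace.affineSpan_eq_top_iff_vectorSpan_eq_top_of_nonempty ℝ _ _ hne).mpr hGtop
  · -- integrality
    intro p hp q hq
    rw [hM] at hp hq
    rcases Finset.mem_union.mp hp with hp1 | hp2 <;>
      rcases Finset.mem_union.mp hq with hq1 | hq2
    · obtain ⟨a, ha, rfl⟩ := Finset.mem_image.mp hp1
      obtain ⟨b, hb, rfl⟩ := Finset.mem_image.mp hq1
      refine ⟨d * |Xz k a - Xz k b|, ?_⟩
      rw [hdLL, he']
      push_cast
      ring
    · obtain ⟨a, ha, rfl⟩ := Finset.mem_image.mp hp1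
      obtain ⟨j, hj, rfl⟩ := Finset.mem_image.mp hq2
      refine ⟨d * Szq k a, ?_⟩
      rw [hdLS a j (Finset.mem_range.mp ha) (Finset.mem_erase.mp hj).1, he']
      push_cast
      ring
    · obtain ⟨j, hj, rfl⟩ := Finset.mem_image.mp hp2
      obtain ⟨a, ha, rfl⟩ := Finset.mem_image.mp hq1
      refine ⟨d * Szq k a, ?_⟩
      rw [dist_comm, hdLS a j (Finset.mem_range.mp ha) (Finset.mem_erase.mp hj).1, he']
      push_cast
      ring
    · obtain ⟨j, hj, rfl⟩ := Finset.mem_image.mp hp2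
      obtain ⟨j', hj', rfl⟩ := Finset.mem_image.mp hq2
      by_cases hjj' : j = j'
      · refine ⟨0, ?_⟩
        rw [hjj', dist_self]
        norm_num
      · refine ⟨d, ?_⟩
        rw [hdSS j j' (Finset.mem_erase.mp hj).1 (Finset.mem_erase.mp hj').1 hjj', he']
        norm_num
  · -- the distance-d pair
    refine ⟨L 0, hmemL 0 (by omega), L 1, hmemL 1 (by omega), ?_⟩
    rw [hdLL 0 1, Xz_zero, Xz_one]
    rw [he']
    norm_num
end
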